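/- arXiv:2105.09181 — 4 statements merged into one kernel-verified Lean document; each statement's English description precedes it below -/
import Mathlib

section
/- Let M be an m-by-n integer matrix with m ≤ n and rank M = m, and let b ∈ ℤ^m. Suppose all entries of M are at most K_1 in absolute value and ‖b‖_∞ ≤ K_2, where K_1, K_2 ≥ 1. If there exists x ∈ ℤ_{>0}^n with M x = b, then there exists y ∈ ℤ_{>0}^n with M y = b and ‖y‖_∞ ≤ (n−m)(n^m m^m K_1^{2m} + m^m K_1^m) + m^m K_1^{m−1} K_2. -/
open Pointwise MeasureTheory

noncomputable section

/-- Embedding of integer vectors into real vectors. -/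
def emb (d : ℕ) : (Fin d → ℤ) → (Fin d → ℝ) := fun x i => (x i : ℝ)

/-- The `N`-fold sumset `NA` (with `0·A = {0}`). -/
def nfold (d : ℕ) (A : Set (Fin d → ℤ)) (N : ℕ) : Set (Fin d → ℤ) :=
  {x | ∃ f : Fin N → (Fin d → ℤ), (∀ i, f i ∈ A) ∧ x = ∑ i, f i}

/-- `P(A) = ⋃_{N ≥ 1} NA`. -/
def PA (d : ℕ) (A : Set (Fin d → ℤ)) : Set (Fin d → ℤ) :=
  ⋃ N ∈ Set.Ici 1, nfold d A N

/-- The width `w(A) = max_{a₁,a₂ ∈ A} ‖a₁ - a₂‖_∞`. -/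
def width (d : ℕ) (A : Finset (Fin d → ℤ)) : ℕ :=
  (A ×ˢ A).sup fun p => Finset.univ.sup fun i => (p.1 i - p.2 i).natAbs

/-- The convex hull `H(A)` in `ℝ^d`. -/
def hull (d : ℕ) (A : Finset (Fin d → ℤ)) : Set (Fin d → ℝ) :=
  convexHull ℝ (emb d '' ↑A)

/-- The cone `C_B = {∑_{b ∈ B} c_b b : c_b ≥ 0}` generated by `B`. -/
def cone (d : ℕ) (B : Finset (Fin d → ℤ)) : Set (Fin d → ℝ) :=
  {x | ∃ c : (Fin d → ℤ) → ℝ, (∀ a, 0 ≤ c a) ∧ x = ∑ a ∈ B, c a • emb d a}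

/-- The lattice (subgroup of `ℤ^d`) generated by a set `S`. -/
def latt (d : ℕ) (S : Set (Fin d → ℤ)) : AddSubgroup (Fin d → ℤ) :=
  AddSubgroup.closure S

/-- The exceptional set `E(A) = (C_A ∩ Λ_A) ∖ P(A)`, viewed inside `ℤ^d`. -/
def excep (d : ℕ) (A : Finset (Fin d → ℤ)) : Set (Fin d → ℤ) :=
  {x | emb d x ∈ cone d A ∧ x ∈ latt d ↑A ∧ x ∉ PA d ↑A}

/-- The set of (lattice) extreme points of `H(A)`: those `p` with `emb p ∈ H(A)` such that
some `v ∈ span ℝ (A - A)`, `v ≠ 0`, satisfies `⟨v,x⟩ > ⟨v,p⟩` for all `x ∈ H(A) ∖ {p}`. -/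
def exP (d : ℕ) (A : Finset (Fin d → ℤ)) : Set (Fin d → ℤ) :=
  {p | emb d p ∈ hull d A ∧
    ∃ v ∈ Submodule.span ℝ (emb d '' ((A : Set (Fin d → ℤ)) - (A : Set (Fin d → ℤ)))),
      v ≠ (0 : Fin d → ℝ) ∧
      ∀ x ∈ hull d A, x ≠ emb d p → (∑ i, v i * emb d p i) < ∑ i, v i * x i}

/-- The structure equation
`NA = (N·H(A) ∩ (N·a₀ + Λ_{A-A})) ∖ ⋃_{a ∈ ex(H(A))} (N·a - E(a - A))`. -/
def structEq (d : ℕ) (A : Finset (Fin d → ℤ)) (a0 : Fin d → ℤ) (N : ℕ) : Prop :=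
  emb d '' nfold d ↑A N =
    ((N : ℝ) • hull d A ∩
      emb d '' (({N • a0} : Set (Fin d → ℤ)) +
        (latt d ((A : Set (Fin d → ℤ)) - (A : Set (Fin d → ℤ))) : Set (Fin d → ℤ)))) \
    ⋃ a ∈ exP d A,
      emb d '' (({N • a} : Set (Fin d → ℤ)) - excep d (A.image fun y => a - y))

/-- `H(A)` is a `d`-simplex: there is `B ⊆ A` with `|B| = d+1`, `B - B` spanning `ℝ^d`,
and `H(A) = H(B)`. -/
def IsSimplex (d : ℕ) (A : Finset (Fin d → ℤ)) : Prop :=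
  ∃ B ⊆ A, B.card = d + 1 ∧
    Submodule.span ℝ (emb d '' ((B : Set (Fin d → ℤ)) - (B : Set (Fin d → ℤ)))) = ⊤ ∧
    hull d B = hull d A

/-- `N_A(v)`: the minimal positive `N` with `v ∈ NA`, and `N_A(0) = 0`. -/
def NAfn (d : ℕ) (A : Set (Fin d → ℤ)) (v : Fin d → ℤ) : ℕ :=
  if v = 0 then 0 else sInf {N : ℕ | 0 < N ∧ v ∈ nfold d A N}

/-- The set `S(A,B)` of `B`-minimal elements. -/
def Smin (d : ℕ) (A B : Set (Fin d → ℤ)) : Set (Fin d → ℤ) :=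
  {0} ∪ {u | u ∈ PA d A ∧ u ≠ 0 ∧
    ∀ f : Fin (NAfn d A u) → (Fin d → ℤ), (∀ i, f i ∈ A) → u = ∑ i, f i →
      ∀ i, f i ∉ B ∪ ({0} : Set (Fin d → ℤ))}

section AuxPositiveSolution
open Finset Module

lemma abs_det_le_colbound {ι : Type*} [Fintype ι] [DecidableEq ι]
    (A : Matrix ι ι ℤ) (c : ι → ℤ) (h : ∀ i j, |A i j| ≤ c j) :
    |A.det| ≤ (Fintype.card ι).factorial * ∏ j, c j := by
  rw [Matrix.det_apply]
  calc |∑ σ : Equiv.Perm ι, Equiv.Perm.sign σ • ∏ i, A (σ i) i|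
      ≤ ∑ σ : Equiv.Perm ι, |Equiv.Perm.sign σ • ∏ i, A (σ i) i| :=
        Finset.abs_sum_le_sum_abs _ _
    _ ≤ ∑ _σ : Equiv.Perm ι, ∏ j, c j := by
        refine Finset.sum_le_sum fun σ _ => ?_
        have h2 : ∏ i, |A (σ i) i| ≤ ∏ i, c i :=
          Finset.prod_le_prod (fun i _ => abs_nonneg _) (fun i _ => h (σ i) i)
        rcases Int.units_eq_one_or (Equiv.Perm.sign σ) with h' | h' <;>
          simpa [h', Finset.abs_prod] using h2
    _ = (Fintype.card ι).factorial * ∏ j, c j := by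
        simp [Finset.sum_const, Finset.card_univ, Fintype.card_perm, nsmul_eq_mul]

lemma exists_rows_det_ne_zero {ι : Type*} [Fintype ι] [DecidableEq ι] {m : ℕ}
    (v : ι → (Fin m → ℚ)) (hv : LinearIndependent ℚ v) :
    ∃ r : ι → Fin m, Function.Injective r ∧
      (Matrix.of fun i j => v j (r i) : Matrix ι ι ℚ).det ≠ 0 := by
  classical
  set B := (Matrix.of fun i j => v j i : Matrix (Fin m) ι ℚ) with hB
  have hrankB : B.rank = Fintype.card ι := by
    rw [Matrix.rank_eq_finrank_span_cols]
    have h1 : Set.range B.col = Set.range v := by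
      ext w; constructor
      · rintro ⟨j, rfl⟩; exact ⟨j, rfl⟩
      · rintro ⟨j, rfl⟩; exact ⟨j, rfl⟩
    rw [h1, finrank_span_eq_card hv]
  have hrows : finrank ℚ (Submodule.span ℚ (Set.range (fun i : Fin m => B i))) =
      Fintype.card ι := by
    have h2 := Matrix.rank_eq_finrank_span_cols B.transpose
    rw [Matrix.rank_transpose, hrankB, Matrix.col_transpose] at h2
    exact h2.symm
  obtain ⟨t, hts, hspan, hind⟩ := exists_linearIndependent ℚ (Set.range (fun i : Fin m => B i))
  have htfin : t.Finite := (Set.finite_range _).subset hts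
  haveI : Fintype t := htfin.fintype
  have hcard : Fintype.card ι = Fintype.card t := by
    have h3 : finrank ℚ (Submodule.span ℚ t) = Fintype.card ι := by rw [hspan]; exact hrows
    rw [finrank_span_set_eq_card hind] at h3
    rw [← h3, Set.toFinset_card]
  set e : ι ≃ t := Fintype.equivOfCardEq hcard with he
  have hmem : ∀ w : t, (w : ι → ℚ) ∈ Set.range (fun i : Fin m => B i) :=
    fun w => hts w.2
  set r : ι → Fin m := fun i => Classical.choose (hmem (e i)) with hr
  have hrspec : ∀ i, B (r i) = ((e i : t) : ι → ℚ) := fun i => Classical.choose_spec (hmem (e i))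
  refine ⟨r, ?_, ?_⟩
  · intro i i' hii
    have : ((e i : t) : ι → ℚ) = ((e i' : t) : ι → ℚ) := by
      rw [← hrspec, ← hrspec, hii]
    exact e.injective (Subtype.ext this)
  · set Q := (Matrix.of fun i j => v j (r i) : Matrix ι ι ℚ) with hQ
    have hrowsQ : (fun i => Q i) = fun i => ((e i : t) : ι → ℚ) := by
      funext i
      exact hrspec i
    have hindQ : LinearIndependent ℚ (fun i => Q i) := by
      rw [hrowsQ]
      exact hind.comp e e.injective
    have hQu : IsUnit Q := Matrix.linearIndependent_rows_iff_isUnit.mp hindQ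
    exact ((Matrix.isUnit_iff_isUnit_det Q).mp hQu).ne_zero

lemma exists_bounded_relation {m n : ℕ} (M : Matrix (Fin m) (Fin n) ℤ) {K1 : ℕ}
    (hM : ∀ i j, |M i j| ≤ (K1 : ℤ)) (hK1 : 1 ≤ K1)
    (S : Finset (Fin n)) (j0 : Fin n) (hj0 : j0 ∉ S)
    (hind : LinearIndependent ℚ (fun j : S => fun i => (M i (j : Fin n) : ℚ)))
    (hspan : (fun i => (M i j0 : ℚ)) ∈
      Submodule.span ℚ (Set.range (fun j : S => fun i => (M i (j : Fin n) : ℚ)))) :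
    ∃ u : Fin n → ℤ, M.mulVec u = 0 ∧ u j0 ≠ 0 ∧
      (∀ j, j ∉ S → j ≠ j0 → u j = 0) ∧
      ∀ j, |u j| ≤ ((m.factorial * K1 ^ m : ℕ) : ℤ) := by
  classical
  set v : S → (Fin m → ℚ) := fun j => fun i => (M i (j : Fin n) : ℚ) with hv
  -- card bound
  have hcard : Fintype.card S ≤ m := by
    have := hind.fintype_card_le_finrank
    rwa [Module.finrank_pi, Fintype.card_fin] at this
  obtain ⟨r, hrinj, hrdet⟩ := exists_rows_det_ne_zero v hind
  set A := (Matrix.of fun i j => M (r i) (j : Fin n) : Matrix S S ℤ) with hA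
  have hAq : A.map ((↑) : ℤ → ℚ) = Matrix.of fun i j => v j (r i) := by
    ext i j; rfl
  have hdetmap : ((A.det : ℤ) : ℚ) = (A.map ((↑) : ℤ → ℚ)).det :=
    RingHom.map_det (Int.castRingHom ℚ) A
  have hdetA : A.det ≠ 0 := by
    intro h0
    apply hrdet
    rw [← hAq, ← hdetmap, h0]
    simp
  set c : S → ℤ := fun i => M (r i) j0 with hc
  set z : S → ℤ := A.cramer c with hz
  set G : ℤ := ((m.factorial * K1 ^ m : ℕ) : ℤ) with hG
  -- bounds on determinants
  have hbound : ∀ (B : Matrix S S ℤ), (∀ i j, |B i j| ≤ (K1 : ℤ)) → |B.det| ≤ G := by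
    intro B hB
    have h1 := abs_det_le_colbound B (fun _ => (K1 : ℤ)) (fun i j => hB i j)
    rw [Finset.prod_const, Finset.card_univ] at h1
    refine h1.trans ?_
    rw [hG]
    push_cast
    have h2 : ((Fintype.card S).factorial : ℤ) ≤ (m.factorial : ℤ) := by
      exact_mod_cast Nat.factorial_le hcard
    have h3 : ((K1 : ℤ)) ^ Fintype.card S ≤ (K1 : ℤ) ^ m :=
      pow_le_pow_right₀ (by exact_mod_cast hK1) hcard
    have h4 : (0 : ℤ) ≤ (K1 : ℤ) ^ Fintype.card S := pow_nonneg (by positivity) _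
    calc ((Fintype.card S).factorial : ℤ) * (K1:ℤ) ^ Fintype.card S
        ≤ (m.factorial : ℤ) * (K1:ℤ) ^ Fintype.card S := by
          exact mul_le_mul_of_nonneg_right h2 h4
      _ ≤ (m.factorial : ℤ) * (K1:ℤ) ^ m := by
          refine mul_le_mul_of_nonneg_left h3 (by positivity)
  have hzbound : ∀ i, |z i| ≤ G := by
    intro i
    rw [hz, Matrix.cramer_apply]
    refine hbound _ ?_
    intro i' j'
    rw [Matrix.updateCol_apply]
    split
    · exact hM _ _
    · exact hM _ _
  have hdetbound : |A.det| ≤ G := hbound A (fun i j => hM _ _)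
  -- the relation over ℚ
  obtain ⟨q, hq⟩ := Submodule.mem_span_range_iff_exists_fun ℚ |>.mp hspan
  have hzq : ∀ i, (z i : ℚ) = (A.det : ℚ) * q i := by
    have hAqu : IsUnit (A.map ((↑) : ℤ → ℚ)) := by
      rw [Matrix.isUnit_iff_isUnit_det, isUnit_iff_ne_zero, ← hdetmap]
      simpa using hdetA
    have hinj : Function.Injective (A.map ((↑) : ℤ → ℚ)).mulVec :=
      Matrix.mulVec_injective_iff_isUnit.mpr hAqu
    have key : (A.map ((↑) : ℤ → ℚ)).mulVec (fun i => (z i : ℚ)) =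
        (A.map ((↑) : ℤ → ℚ)).mulVec (fun i => (A.det : ℚ) * q i) := by
      have h5 : A.mulVec z = A.det • c := Matrix.mulVec_cramer A c
      funext i0
      have h6 : (A.map ((↑) : ℤ → ℚ)).mulVec (fun i => (z i : ℚ)) i0
          = ((A.mulVec z i0 : ℤ) : ℚ) := by
        simp [Matrix.mulVec, dotProduct]
      rw [h6, h5]
      simp only [Matrix.mulVec, dotProduct, Matrix.map_apply]
      have h7 : ∑ j : S, ((A i0 j : ℚ)) * ((A.det : ℚ) * q j)
          = (A.det : ℚ) * ∑ j : S, q j * (A i0 j : ℚ) := by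
        rw [Finset.mul_sum]
        refine Finset.sum_congr rfl fun j _ => by ring
      have h8 : ∑ j : S, q j * (A i0 j : ℚ) = (c i0 : ℚ) := by
        have h9 := congrFun hq (r i0)
        rw [Finset.sum_apply] at h9
        rw [← h9]
        exact Finset.sum_congr rfl fun j _ => rfl
      rw [h7, h8]
      rw [Pi.smul_apply, smul_eq_mul]
      push_cast
      ring
    have h10 := hinj key
    exact fun i => congrFun h10 i
  -- now define u
  set u : Fin n → ℤ := fun j =>
    if h : j ∈ S then -z ⟨j, h⟩ else if j = j0 then A.det else 0 with hu
  have hu0 : ∀ j, j ∉ S → j ≠ j0 → u j = 0 := by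
    intro j h1 h2
    simp [hu, dif_neg h1, if_neg h2]
  have huj0 : u j0 = A.det := by simp [hu, dif_neg hj0]
  have huS : ∀ (j : Fin n) (h : j ∈ S), u j = -z ⟨j, h⟩ := by
    intro j h; simp [hu, dif_pos h]
  refine ⟨u, ?_, ?_, hu0, ?_⟩
  · funext i0
    show ∑ j, M i0 j * u j = 0
    have hsub : ∑ j ∈ insert j0 S, M i0 j * u j = ∑ j, M i0 j * u j := by
      refine Finset.sum_subset (Finset.subset_univ _) fun j _ hj => ?_
      have h1 : j ∉ S := fun hmem => hj (Finset.mem_insert_of_mem hmem)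
      have h2 : j ≠ j0 := fun he => hj (he ▸ Finset.mem_insert_self _ _)
      rw [hu0 j h1 h2, mul_zero]
    rw [← hsub, Finset.sum_insert hj0, huj0]
    have hSsum : ∑ j ∈ S, M i0 j * u j = ∑ j : S, M i0 (j : Fin n) * (-z j) := by
      rw [← Finset.sum_attach S (fun j => M i0 j * u j)]
      refine Finset.sum_congr rfl fun j _ => ?_
      rw [huS (j : Fin n) j.2]
    rw [hSsum]
    have hcast : ((M i0 j0 * A.det + ∑ j : S, M i0 (j : Fin n) * (-z j) : ℤ) : ℚ) = 0 := by
      push_cast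
      have h11 : ∑ j : S, (M i0 (j : Fin n) : ℚ) * (-(z j : ℚ))
          = -((A.det : ℚ) * ∑ j : S, q j * (M i0 (j : Fin n) : ℚ)) := by
        have h11a : ∀ j : S, (M i0 (j : Fin n) : ℚ) * (-(z j : ℚ))
            = -((A.det : ℚ) * (q j * (M i0 (j : Fin n) : ℚ))) := fun j => by
          rw [hzq j]; ring
        rw [Finset.sum_congr rfl (fun j _ => h11a j), Finset.sum_neg_distrib,
          Finset.mul_sum]
      rw [h11]
      have h12 : ∑ j : S, q j * (M i0 (j : Fin n) : ℚ) = (M i0 j0 : ℚ) := by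
        have h9 := congrFun hq i0
        rw [Finset.sum_apply] at h9
        rw [← h9]
        exact Finset.sum_congr rfl fun j _ => rfl
      rw [h12, ← hdetmap]; ring
    exact_mod_cast hcast
  · rw [huj0]; exact hdetA
  · intro j
    by_cases h1 : j ∈ S
    · rw [huS j h1, abs_neg]; exact hzbound _
    · by_cases h2 : j = j0
      · rw [h2, huj0]; exact hdetbound
      · rw [hu0 j h1 h2]
        simp [hG]
        positivity

lemma exists_relation_of_dependent {m n : ℕ} (M : Matrix (Fin m) (Fin n) ℤ) {K1 : ℕ}
    (hM : ∀ i j, |M i j| ≤ (K1 : ℤ)) (hK1 : 1 ≤ K1) (L : Finset (Fin n))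
    (hdep : ¬ LinearIndependent ℚ (fun j : L => fun i => (M i (j : Fin n) : ℚ))) :
    ∃ u : Fin n → ℤ, M.mulVec u = 0 ∧ u ≠ 0 ∧ (∀ j, j ∉ L → u j = 0) ∧
      ∀ j, |u j| ≤ ((m.factorial * K1 ^ m : ℕ) : ℤ) := by
  classical
  set F : L → (Fin m → ℚ) := fun j => fun i => (M i (j : Fin n) : ℚ) with hF
  obtain ⟨I, hI, hmax⟩ := exists_maximal_linearIndepOn ℚ F
  have hIne : I ≠ Set.univ := by
    intro h
    apply hdep
    have : LinearIndependent ℚ (fun x : I => F ↑x) := hI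
    rw [h] at this
    exact this.comp (Equiv.Set.univ _).symm (Equiv.injective _)
  obtain ⟨i0, hi0⟩ : ∃ i0 : L, i0 ∉ I := by
    by_contra h
    push_neg at h
    exact hIne (Set.eq_univ_of_forall h)
  obtain ⟨a, ha, haspan⟩ := hmax i0 hi0
  -- S : Finset (Fin n)
  set S : Finset (Fin n) := ((Set.toFinite I).toFinset).map
    ⟨Subtype.val, Subtype.val_injective⟩ with hS
  have hmemS : ∀ j : Fin n, j ∈ S ↔ ∃ h : j ∈ L, (⟨j, h⟩ : L) ∈ I := by
    intro j
    simp only [hS, Finset.mem_map, Set.Finite.mem_toFinset, Function.Embedding.coeFn_mk]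
    constructor
    · rintro ⟨⟨j', hj'⟩, hj'I, rfl⟩; exact ⟨hj', hj'I⟩
    · rintro ⟨h1, h2⟩; exact ⟨⟨j, h1⟩, h2, rfl⟩
  set j0 : Fin n := (i0 : Fin n) with hj0def
  have hj0 : j0 ∉ S := by
    rw [hmemS]
    rintro ⟨h1, h2⟩
    have : (⟨j0, h1⟩ : L) = i0 := Subtype.ext rfl
    rw [this] at h2
    exact hi0 h2
  -- equivalence between ↥S and ↥I
  have hmemS' : ∀ j : S, ∃ i : I, ((i : L) : Fin n) = (j : Fin n) := by
    intro j
    obtain ⟨h1, h2⟩ := (hmemS j).mp j.2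
    exact ⟨⟨⟨j, h1⟩, h2⟩, rfl⟩
  set e : S → I := fun j => Classical.choose (hmemS' j) with he
  have hespec : ∀ j : S, (((e j : L)) : Fin n) = (j : Fin n) :=
    fun j => Classical.choose_spec (hmemS' j)
  have heinj : Function.Injective e := by
    intro j j' h
    apply Subtype.ext
    rw [← hespec j, ← hespec j', h]
  have hebij : Function.Bijective e := by
    refine ⟨heinj, ?_⟩
    intro i
    have hji : ((i : L) : Fin n) ∈ S := (hmemS _).mpr ⟨(i : L).2, by
      simpa using i.2⟩
    refine ⟨⟨((i : L) : Fin n), hji⟩, ?_⟩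
    apply Subtype.ext; apply Subtype.ext
    exact hespec ⟨((i : L) : Fin n), hji⟩
  set eqv : S ≃ I := Equiv.ofBijective e hebij with heqv
  have hfam : (fun x : S => F (eqv x)) = (fun j : S => fun i => (M i (j : Fin n) : ℚ)) := by
    funext j
    show (fun i => (M i ((e j : L) : Fin n) : ℚ)) = fun i => (M i (j : Fin n) : ℚ)
    rw [hespec j]
  have hindS : LinearIndependent ℚ (fun j : S => fun i => (M i (j : Fin n) : ℚ)) := by
    have h1 := hI.comp eqv eqv.injective
    rwa [show ((fun x : I => F ↑x) ∘ eqv) = (fun j : S => fun i => (M i (j : Fin n) : ℚ))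
      from hfam] at h1
  have hspanS : (fun i => (M i j0 : ℚ)) ∈
      Submodule.span ℚ (Set.range (fun j : S => fun i => (M i (j : Fin n) : ℚ))) := by
    have hset : F '' I = Set.range (fun j : S => fun i => (M i (j : Fin n) : ℚ)) := by
      rw [← hfam]
      ext w
      constructor
      · rintro ⟨i, hiI, rfl⟩
        exact ⟨eqv.symm ⟨i, hiI⟩, by simp⟩
      · rintro ⟨j, rfl⟩
        exact ⟨eqv j, (eqv j).2, rfl⟩
    rw [← hset]
    have h2 : a • F i0 ∈ Submodule.span ℚ (F '' I) := haspan
    have h3 : F i0 ∈ Submodule.span ℚ (F '' I) := by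
      have := Submodule.smul_mem (Submodule.span ℚ (F '' I)) a⁻¹ h2
      rwa [smul_smul, inv_mul_cancel₀ ha, one_smul] at this
    exact h3
  obtain ⟨u, hu1, hu2, hu3, hu4⟩ := exists_bounded_relation M hM hK1 S j0 hj0 hindS hspanS
  refine ⟨u, hu1, ?_, ?_, hu4⟩
  · intro h0
    exact hu2 (by rw [h0]; rfl)
  · intro j hjL
    refine hu3 j ?_ ?_
    · intro hjS
      obtain ⟨h1, _⟩ := (hmemS j).mp hjS
      exact hjL h1
    · intro hje
      rw [hje] at hjL
      exact hjL i0.2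

lemma exists_reduced_solution {m n : ℕ} (M : Matrix (Fin m) (Fin n) ℤ) (b : Fin m → ℤ)
    {K1 : ℕ} (hM : ∀ i j, |M i j| ≤ (K1 : ℤ)) (hK1 : 1 ≤ K1)
    (x : Fin n → ℤ) (hx : ∀ j, 0 < x j) (hMx : M.mulVec x = b) :
    ∃ y : Fin n → ℤ, (∀ j, 0 < y j) ∧ M.mulVec y = b ∧
      LinearIndependent ℚ
        (fun j : (Finset.univ.filter
            (fun j => ((m.factorial * K1 ^ m : ℕ) : ℤ) < y j) : Finset (Fin n)) =>
          fun i => (M i (j : Fin n) : ℚ)) := by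
  classical
  set G : ℤ := ((m.factorial * K1 ^ m : ℕ) : ℤ) with hG
  set Lset : (Fin n → ℤ) → Finset (Fin n) := fun y => Finset.univ.filter (fun j => G < y j)
    with hLset
  suffices H : ∀ (N : ℕ) (x : Fin n → ℤ), (∀ j, 0 < x j) → M.mulVec x = b →
      (Lset x).card ≤ N →
      ∃ y : Fin n → ℤ, (∀ j, 0 < y j) ∧ M.mulVec y = b ∧
        LinearIndependent ℚ (fun j : (Lset y) => fun i => (M i (j : Fin n) : ℚ)) by
    exact H (Lset x).card x hx hMx le_rfl
  intro N
  induction N with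
  | zero =>
    intro x hx hMx hcard
    refine ⟨x, hx, hMx, ?_⟩
    have hempty : Lset x = ∅ := Finset.card_eq_zero.mp (Nat.le_zero.mp hcard)
    haveI : IsEmpty (Lset x) := by rw [hempty]; exact Finset.isEmpty_coe_sort.mpr rfl
    exact linearIndependent_empty_type
  | succ N ih =>
    intro x hx hMx hcard
    by_cases hdep : LinearIndependent ℚ (fun j : (Lset x) => fun i => (M i (j : Fin n) : ℚ))
    · exact ⟨x, hx, hMx, hdep⟩
    · obtain ⟨u, hu1, hu2, hu3, hu4⟩ := exists_relation_of_dependent M hM hK1 (Lset x) hdep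
      obtain ⟨j1, hj1⟩ : ∃ j1, u j1 ≠ 0 := by
        by_contra h
        push_neg at h
        exact hu2 (funext h)
      set w : Fin n → ℤ := if 0 < u j1 then u else -u with hw
      have hw1 : M.mulVec w = 0 := by
        rw [hw]; split
        · exact hu1
        · rw [Matrix.mulVec_neg, hu1, neg_zero]
      have hw3 : ∀ j, j ∉ Lset x → w j = 0 := by
        intro j hj; rw [hw]; split
        · exact hu3 j hj
        · rw [Pi.neg_apply, hu3 j hj, neg_zero]
      have hw4 : ∀ j, |w j| ≤ G := by
        intro j; rw [hw]; split
        · exact hu4 j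
        · rw [Pi.neg_apply, abs_neg]; exact hu4 j
      have hwj1 : 0 < w j1 := by
        rw [hw]; split
        · assumption
        · rw [Pi.neg_apply]; omega
      set P : Finset (Fin n) := Finset.univ.filter (fun j => 0 < w j) with hP
      have hPne : P.Nonempty := ⟨j1, by simp [hP, hwj1]⟩
      have hPL : ∀ j ∈ P, j ∈ Lset x := by
        intro j hj
        by_contra hjL
        have := hw3 j hjL
        simp only [hP, Finset.mem_filter] at hj
        omega
      have hPx : ∀ j ∈ P, G < x j := by
        intro j hj
        have := hPL j hj
        simp only [hLset, Finset.mem_filter] at this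
        exact this.2
      set t : ℤ := P.inf' hPne (fun j => (x j - 1) / (w j)) with ht
      have ht1 : 1 ≤ t := by
        rw [ht]
        refine Finset.le_inf' hPne _ fun j hj => ?_
        have hwj : 0 < w j := by simp only [hP, Finset.mem_filter] at hj; exact hj.2
        rw [Int.le_ediv_iff_mul_le hwj, one_mul]
        have h1 := hw4 j
        have h2 := hPx j hj
        have h3 := le_abs_self (w j)
        omega
      set y : Fin n → ℤ := fun j => x j - t * w j with hy
      have hsol : M.mulVec y = b := by
        have : y = x - t • w := by
          funext j
          rw [Pi.sub_apply, Pi.smul_apply, smul_eq_mul]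
        rw [this, Matrix.mulVec_sub, Matrix.mulVec_smul, hw1, hMx]
        simp
      have hpos : ∀ j, 0 < y j := by
        intro j
        by_cases hwj : 0 < w j
        · have hjP : j ∈ P := by simp [hP, hwj]
          have := Finset.inf'_le (fun j => (x j - 1) / (w j)) hjP
          rw [← ht] at this
          have h2 : t * w j ≤ x j - 1 := by
            rw [← Int.le_ediv_iff_mul_le hwj]
            exact this
          simp only [hy]; omega
        · push_neg at hwj
          have : t * w j ≤ 0 := mul_nonpos_of_nonneg_of_nonpos (by omega) hwj
          have := hx j
          simp only [hy]; omega
      have hsub : Lset y ⊆ Lset x := by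
        intro j hj
        by_contra hjL
        have h0 := hw3 j hjL
        simp only [hLset, Finset.mem_filter] at hj hjL ⊢
        have : y j = x j := by simp [hy, h0]
        rw [this] at hj
        exact hjL ⟨Finset.mem_univ j, hj.2⟩
      obtain ⟨js, hjs, hjseq⟩ := Finset.exists_mem_eq_inf' hPne (fun j => (x j - 1) / (w j))
      have hwjs : 0 < w js := by simp only [hP, Finset.mem_filter] at hjs; exact hjs.2
      have hjsout : js ∉ Lset y := by
        have h3 : x js - 1 < ((x js - 1) / (w js) + 1) * (w js) :=
          Int.lt_ediv_add_one_mul_self _ hwjs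
        have h4 : y js ≤ w js := by
          have : t = (x js - 1) / (w js) := by rw [ht, hjseq]
          simp only [hy, this]
          nlinarith [h3]
        have h5 : y js ≤ G := h4.trans ((le_abs_self _).trans (hw4 js))
        simp only [hLset, Finset.mem_filter]
        push_neg
        intro
        omega
      have hlt : (Lset y).card < (Lset x).card := by
        refine Finset.card_lt_card ⟨hsub, fun hba => ?_⟩
        exact hjsout (hba (hPL js hjs))
      exact ih y hpos hsol (by omega)

lemma factorial_le_succ_pow : ∀ m : ℕ, m.factorial ≤ (m + 1) ^ (m - 1)
  | 0 => le_refl 1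
  | 1 => by norm_num
  | (m + 2) => by
    have ih := factorial_le_succ_pow (m + 1)
    have h : (m + 1).factorial ≤ (m + 2) ^ m := by simpa using ih
    calc (m + 2).factorial = (m + 2) * (m + 1).factorial := rfl
      _ ≤ (m + 2) * (m + 2) ^ m := Nat.mul_le_mul_left _ h
      _ = (m + 2) ^ (m + 1) := by rw [pow_succ]; ring
      _ ≤ (m + 3) ^ (m + 1) := Nat.pow_le_pow_left (by omega) _
      _ = (m + 3) ^ (m + 2 - 1) := by norm_num

lemma numeric_bound_small {m n K1 K2 : ℕ} (hmn : m < n) (hK1 : 1 ≤ K1) (hK2 : 1 ≤ K2) :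
    m.factorial * K1 ^ m ≤
      (n - m) * (n ^ m * m ^ m * K1 ^ (2 * m) + m ^ m * K1 ^ m)
        + m ^ m * K1 ^ (m - 1) * K2 := by
  have h1 : m.factorial * K1 ^ m ≤ m ^ m * K1 ^ m :=
    Nat.mul_le_mul_right _ (Nat.factorial_le_pow m)
  have h2 : 1 ≤ n - m := by omega
  calc m.factorial * K1 ^ m ≤ m ^ m * K1 ^ m := h1
    _ ≤ (n - m) * (n ^ m * m ^ m * K1 ^ (2 * m) + m ^ m * K1 ^ m) := by
        calc m ^ m * K1 ^ m ≤ n ^ m * m ^ m * K1 ^ (2 * m) + m ^ m * K1 ^ m := by omega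
          _ = 1 * (n ^ m * m ^ m * K1 ^ (2 * m) + m ^ m * K1 ^ m) := (one_mul _).symm
          _ ≤ (n - m) * (n ^ m * m ^ m * K1 ^ (2 * m) + m ^ m * K1 ^ m) :=
              Nat.mul_le_mul_right _ h2
    _ ≤ _ := Nat.le_add_right _ _

lemma numeric_bound_large {m n k K1 K2 : ℕ} (hmn : m < n) (hK1 : 1 ≤ K1) (hK2 : 1 ≤ K2)
    (hk1 : 1 ≤ k) (hkm : k ≤ m) :
    k.factorial * ((K2 + n * K1 * (m.factorial * K1 ^ m)) * K1 ^ (k - 1)) ≤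
      (n - m) * (n ^ m * m ^ m * K1 ^ (2 * m) + m ^ m * K1 ^ m)
        + m ^ m * K1 ^ (m - 1) * K2 := by
  have hL : k.factorial * ((K2 + n * K1 * (m.factorial * K1 ^ m)) * K1 ^ (k - 1))
      = k.factorial * K1 ^ (k - 1) * K2
        + n * (k.factorial * m.factorial * K1 ^ (k - 1 + 1 + m)) := by
    rw [pow_add, pow_add, pow_one]; ring
  rw [hL]
  have hterm1 : k.factorial * K1 ^ (k - 1) * K2 ≤ m ^ m * K1 ^ (m - 1) * K2 := by
    refine Nat.mul_le_mul_right _ ?_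
    exact Nat.mul_le_mul ((Nat.factorial_le hkm).trans (Nat.factorial_le_pow m))
      (Nat.pow_le_pow_right hK1 (by omega))
  have hterm2 : n * (k.factorial * m.factorial * K1 ^ (k - 1 + 1 + m)) ≤
      (n - m) * (n ^ m * m ^ m * K1 ^ (2 * m) + m ^ m * K1 ^ m) := by
    have he : k - 1 + 1 + m = k + m := by omega
    rw [he]
    have h3 : K1 ^ (k + m) ≤ K1 ^ (2 * m) := Nat.pow_le_pow_right hK1 (by omega)
    have h4 : n * (k.factorial * m.factorial) ≤ n ^ m * m ^ m := by
      have h5 : k.factorial ≤ (m + 1) ^ (m - 1) :=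
        (Nat.factorial_le hkm).trans (factorial_le_succ_pow m)
      have h6 : (m + 1) ^ (m - 1) ≤ n ^ (m - 1) := Nat.pow_le_pow_left (by omega) _
      calc n * (k.factorial * m.factorial)
          ≤ n * (n ^ (m - 1) * m ^ m) := by
            refine Nat.mul_le_mul_left _ (Nat.mul_le_mul (h5.trans h6)
              (Nat.factorial_le_pow m))
        _ = n ^ (m - 1 + 1) * m ^ m := by rw [pow_succ]; ring
        _ ≤ n ^ m * m ^ m := by
            refine Nat.mul_le_mul_right _ (Nat.pow_le_pow_right (by omega) (by omega))
    calc n * (k.factorial * m.factorial * K1 ^ (k + m))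
        = n * (k.factorial * m.factorial) * K1 ^ (k + m) := by ring
      _ ≤ n ^ m * m ^ m * K1 ^ (2 * m) := Nat.mul_le_mul h4 h3
      _ ≤ 1 * (n ^ m * m ^ m * K1 ^ (2 * m) + m ^ m * K1 ^ m) := by omega
      _ ≤ (n - m) * (n ^ m * m ^ m * K1 ^ (2 * m) + m ^ m * K1 ^ m) :=
          Nat.mul_le_mul_right _ (by omega)
  omega

lemma final_coord_bound {m n : ℕ} (M : Matrix (Fin m) (Fin n) ℤ) (b : Fin m → ℤ)
    {K1 K2 : ℕ} (hM : ∀ i j, |M i j| ≤ (K1 : ℤ)) (hb : ∀ i, |b i| ≤ (K2 : ℤ))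
    (hK1 : 1 ≤ K1) (hK2 : 1 ≤ K2)
    (y : Fin n → ℤ) (hy : ∀ j, 0 < y j) (hMy : M.mulVec y = b)
    (L : Finset (Fin n))
    (hL : L = Finset.univ.filter (fun j => ((m.factorial * K1 ^ m : ℕ) : ℤ) < y j))
    (hind : LinearIndependent ℚ (fun j : L => fun i => (M i (j : Fin n) : ℚ))) :
    (∀ j, j ∉ L → |y j| ≤ ((m.factorial * K1 ^ m : ℕ) : ℤ)) ∧
    (∀ j ∈ L, |y j| ≤ ((L.card.factorial *
        ((K2 + n * K1 * (m.factorial * K1 ^ m)) * K1 ^ (L.card - 1)) : ℕ) : ℤ)) := by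
  classical
  set G : ℤ := ((m.factorial * K1 ^ m : ℕ) : ℤ) with hG
  have hsmall : ∀ j, j ∉ L → |y j| ≤ G := by
    intro j hj
    simp only [hL, Finset.mem_filter, Finset.mem_univ, true_and, not_lt] at hj
    rw [abs_of_pos (hy j)]
    exact hj
  refine ⟨hsmall, ?_⟩
  intro j0 hj0
  -- set up the square system
  obtain ⟨r, hrinj, hrdet⟩ := exists_rows_det_ne_zero
    (fun j : L => fun i => (M i (j : Fin n) : ℚ)) hind
  set A := (Matrix.of fun i j => M (r i) (j : Fin n) : Matrix L L ℤ) with hA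
  have hdetmap : ((A.det : ℤ) : ℚ) = (A.map ((↑) : ℤ → ℚ)).det :=
    RingHom.map_det (Int.castRingHom ℚ) A
  have hdetA : A.det ≠ 0 := by
    intro h0
    apply hrdet
    have : (A.map ((↑) : ℤ → ℚ)) = Matrix.of fun i j => (fun j : L => fun i => (M i (j : Fin n) : ℚ)) j (r i) := by
      ext i j; rfl
    rw [← this, ← hdetmap, h0]
    simp
  set c : L → ℤ := fun i => b (r i) - ∑ j ∈ Lᶜ, M (r i) j * y j with hc
  have hAc : A.mulVec (fun j : L => y (j : Fin n)) = c := by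
    funext i
    show ∑ j : L, A i j * y (j : Fin n) = c i
    have h1 : ∑ j : L, M (r i) (j : Fin n) * y (j : Fin n) = ∑ j ∈ L, M (r i) j * y j :=
      Finset.sum_coe_sort L (fun j => M (r i) j * y j)
    have h2 : ∑ j ∈ L, M (r i) j * y j + ∑ j ∈ Lᶜ, M (r i) j * y j
        = ∑ j, M (r i) j * y j := Finset.sum_add_sum_compl L _
    have h3 : ∑ j, M (r i) j * y j = b (r i) := congrFun hMy (r i)
    show ∑ j : L, M (r i) (j : Fin n) * y (j : Fin n) = b (r i) - ∑ j ∈ Lᶜ, M (r i) j * y j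
    omega
  have hdy : A.det • (fun j : L => y (j : Fin n)) = A.cramer c := by
    rw [Matrix.cramer_eq_adjugate_mulVec, ← hAc, Matrix.mulVec_mulVec, Matrix.adjugate_mul,
      Matrix.smul_mulVec, Matrix.one_mulVec]
  set Kc : ℤ := (K2 : ℤ) + n * K1 * G with hKc
  have hcb : ∀ i, |c i| ≤ Kc := by
    intro i
    rw [hc]
    refine (abs_sub _ _).trans ?_
    have h4 : |∑ j ∈ Lᶜ, M (r i) j * y j| ≤ ∑ j ∈ Lᶜ, |M (r i) j * y j| :=
      Finset.abs_sum_le_sum_abs _ _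
    have h5 : ∑ j ∈ Lᶜ, |M (r i) j * y j| ≤ ∑ _j ∈ Lᶜ, (K1 : ℤ) * G := by
      refine Finset.sum_le_sum fun j hj => ?_
      rw [abs_mul]
      have h6 : j ∉ L := Finset.mem_compl.mp hj
      exact mul_le_mul (hM _ _) (hsmall j h6) (abs_nonneg _) (by positivity)
    have h7 : ∑ _j ∈ Lᶜ, (K1 : ℤ) * G = (Lᶜ.card : ℤ) * ((K1 : ℤ) * G) := by
      rw [Finset.sum_const, nsmul_eq_mul]
    have h8 : (Lᶜ.card : ℤ) ≤ n := by
      have := Finset.card_le_univ Lᶜ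
      simp only [Finset.card_univ, Fintype.card_fin] at this
      exact_mod_cast this
    have h9 : (Lᶜ.card : ℤ) * ((K1 : ℤ) * G) ≤ (n : ℤ) * ((K1 : ℤ) * G) := by
      refine mul_le_mul_of_nonneg_right h8 (by positivity)
    have h10 := hb (r i)
    rw [hKc]
    have : |b (r i)| + |∑ j ∈ Lᶜ, M (r i) j * y j| ≤ (K2 : ℤ) + (n : ℤ) * ((K1:ℤ) * G) := by
      have := h4.trans (h5.trans (h7.le.trans h9))
      omega
    refine this.trans ?_
    push_cast
    ring_nf
    exact le_refl _
  -- bound cramer entries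
  have hcramer : ∀ i : L, |A.cramer c i| ≤
      ((Fintype.card L).factorial : ℤ) * (Kc * (K1 : ℤ) ^ (Fintype.card L - 1)) := by
    intro i
    rw [Matrix.cramer_apply]
    have hcol := abs_det_le_colbound (A.updateCol i c)
      (Function.update (fun _ : L => (K1 : ℤ)) i Kc) ?_
    · refine hcol.trans ?_
      have hprod : ∏ j, Function.update (fun _ : L => (K1 : ℤ)) i Kc j
          = Kc * (K1 : ℤ) ^ (Fintype.card L - 1) := by
        rw [Finset.prod_update_of_mem (Finset.mem_univ i)]
        rw [Finset.prod_const]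
        congr 1
        rw [Finset.card_sdiff_of_subset (Finset.subset_univ {i}), Finset.card_singleton,
          Finset.card_univ]
      rw [hprod]
    · intro i' j'
      rw [Matrix.updateCol_apply]
      rcases eq_or_ne j' i with h | h
      · rw [if_pos h, Function.update_apply, if_pos h]
        exact hcb i'
      · rw [if_neg h, Function.update_apply, if_neg h]
        exact hM _ _
  -- conclude
  have hcardL : Fintype.card L = L.card := Fintype.card_coe L
  set i0 : L := ⟨j0, hj0⟩ with hi0
  have h11 : A.det * y j0 = A.cramer c i0 := by
    have := congrFun hdy i0
    simpa [Pi.smul_apply, smul_eq_mul] using this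
  have h12 : |y j0| ≤ |A.det * y j0| := by
    rw [abs_mul]
    refine le_mul_of_one_le_left (abs_nonneg _) ?_
    exact Int.one_le_abs hdetA
  have h13 := h12.trans (h11 ▸ hcramer i0)
  refine h13.trans ?_
  rw [hcardL]
  push_cast [hKc, hG]
  ring_nf
  exact le_refl _

lemma det_ne_zero_of_rank_eq {m : ℕ} (M : Matrix (Fin m) (Fin m) ℤ) (hrank : M.rank = m) :
    M.det ≠ 0 := by
  classical
  -- N = span of columns over ℤ has finrank m
  set N : Submodule ℤ (Fin m → ℤ) := Submodule.span ℤ (Set.range M.transpose) with hN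
  have hfinrank : finrank ℤ N = m := by
    exact (Matrix.rank_eq_finrank_span_cols M).symm.trans hrank
  -- basis of N of size m
  obtain ⟨k, bN⟩ := Submodule.basisOfPid (Pi.basisFun ℤ (Fin m)) N
  have hk : k = m := by
    have := finrank_eq_card_basis bN
    rw [hfinrank, Fintype.card_fin] at this
    omega
  -- cast to ℚ
  set f : (Fin m → ℤ) →ₗ[ℤ] (Fin m → ℚ) :=
    LinearMap.pi (fun i => (Int.castAddHom ℚ).toIntLinearMap.comp (LinearMap.proj i)) with hf
  have hfapp : ∀ v i, f v i = ((v i : ℤ) : ℚ) := fun v i => rfl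
  have hfinj : Function.Injective f := by
    intro a b h
    funext i
    have := congrFun h i
    rw [hfapp, hfapp] at this
    exact_mod_cast this
  set w : Fin k → (Fin m → ℚ) := fun i => f ((bN i : Fin m → ℤ)) with hw
  have hwindZ : LinearIndependent ℤ w := by
    have h1 : LinearIndependent ℤ (fun i => ((bN i : Fin m → ℤ))) :=
      bN.linearIndependent.map' N.subtype (Submodule.ker_subtype N)
    exact h1.map' f (LinearMap.ker_eq_bot.mpr hfinj)
  have hwind : LinearIndependent ℚ w :=
    (LinearIndependent.iff_fractionRing ℤ ℚ).mp hwindZ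
  -- w i lands in the ℚ-span of the cast columns
  set W : Submodule ℚ (Fin m → ℚ) :=
    Submodule.span ℚ (Set.range (M.map ((↑) : ℤ → ℚ)).transpose) with hW
  have himg : ∀ v ∈ N, f v ∈ W := by
    intro v hv
    have hle : N ≤ (W.restrictScalars ℤ).comap f := by
      rw [hN]
      rw [Submodule.span_le]
      rintro _ ⟨j, rfl⟩
      simp only [SetLike.mem_coe, Submodule.mem_comap, Submodule.restrictScalars_mem]
      have : f (M.transpose j) = (M.map ((↑) : ℤ → ℚ)).transpose j := by
        funext i; rfl
      rw [this, hW]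
      exact Submodule.subset_span ⟨j, rfl⟩
    exact hle hv
  have hwW : ∀ i, w i ∈ W := fun i => himg _ (bN i).2
  -- so W has finrank ≥ k = m, hence W = ⊤
  have hWtop : W = ⊤ := by
    have hg : LinearIndependent ℚ (fun i => (⟨w i, hwW i⟩ : W)) := by
      refine LinearIndependent.of_comp W.subtype ?_
      exact hwind
    have hcard := hg.fintype_card_le_finrank
    rw [Fintype.card_fin] at hcard
    rw [hk] at hcard
    have hle : finrank ℚ W ≤ m := by
      have := Submodule.finrank_le W
      rwa [Module.finrank_pi, Fintype.card_fin] at this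
    refine Submodule.eq_top_of_finrank_eq ?_
    rw [Module.finrank_pi, Fintype.card_fin]
    omega
  -- hence the ℚ matrix is invertible
  set Mq := M.map ((↑) : ℤ → ℚ) with hMq
  have hsurj : Function.Surjective Mq.mulVecLin := by
    rw [← LinearMap.range_eq_top, Matrix.range_mulVecLin]; exact hWtop
  have hinj : Function.Injective Mq.mulVec := by
    have := (LinearMap.injective_iff_surjective (f := Mq.mulVecLin)).mpr hsurj
    exact this
  have hunit : IsUnit Mq := Matrix.mulVec_injective_iff_isUnit.mp hinj
  have hdetq : Mq.det ≠ 0 := ((Matrix.isUnit_iff_isUnit_det Mq).mp hunit).ne_zero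
  intro h0
  apply hdetq
  have : ((M.det : ℤ) : ℚ) = Mq.det := RingHom.map_det (Int.castRingHom ℚ) M
  rw [← this, h0]
  simp

/-- A positive integer solution of `My = b` with controlled size, full-rank case. -/
theorem positive_solution_full_rank (m n : ℕ) (hmn : m ≤ n)
    (M : Matrix (Fin m) (Fin n) ℤ) (hrank : M.rank = m)
    (b : Fin m → ℤ) (K1 K2 : ℕ) (hK1 : 1 ≤ K1) (hK2 : 1 ≤ K2)
    (hM : ∀ i j, (M i j).natAbs ≤ K1) (hb : ∀ i, (b i).natAbs ≤ K2)
    (x : Fin n → ℤ) (hx : ∀ j, 0 < x j) (hMx : M.mulVec x = b) :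
    ∃ y : Fin n → ℤ, (∀ j, 0 < y j) ∧ M.mulVec y = b ∧
      ∀ j, (y j).natAbs ≤
        (n - m) * (n ^ m * m ^ m * K1 ^ (2 * m) + m ^ m * K1 ^ m)
          + m ^ m * K1 ^ (m - 1) * K2 := by
  classical
  have hM' : ∀ i j, |M i j| ≤ (K1 : ℤ) := by
    intro i j
    rw [Int.abs_eq_natAbs]
    exact_mod_cast hM i j
  have hb' : ∀ i, |b i| ≤ (K2 : ℤ) := by
    intro i
    rw [Int.abs_eq_natAbs]
    exact_mod_cast hb i
  rcases hmn.lt_or_eq with hlt | heq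
  · -- the case m < n
    obtain ⟨y, hy, hMy, hind⟩ := exists_reduced_solution M b hM' hK1 x hx hMx
    set L : Finset (Fin n) := Finset.univ.filter
      (fun j => ((m.factorial * K1 ^ m : ℕ) : ℤ) < y j) with hL
    obtain ⟨hsmall, hlarge⟩ := final_coord_bound M b hM' hb' hK1 hK2 y hy hMy L hL hind
    have hkm : L.card ≤ m := by
      have h1 := hind.fintype_card_le_finrank
      rwa [Module.finrank_pi, Fintype.card_fin, Fintype.card_coe] at h1
    refine ⟨y, hy, hMy, ?_⟩
    intro j
    have habs : |y j| ≤ (((n - m) * (n ^ m * m ^ m * K1 ^ (2 * m) + m ^ m * K1 ^ m)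
        + m ^ m * K1 ^ (m - 1) * K2 : ℕ) : ℤ) := by
      by_cases hj : j ∈ L
      · refine (hlarge j hj).trans ?_
        have hk1 : 1 ≤ L.card := Finset.card_pos.mpr ⟨j, hj⟩
        exact_mod_cast numeric_bound_large hlt hK1 hK2 hk1 hkm
      · refine (hsmall j hj).trans ?_
        exact_mod_cast numeric_bound_small hlt hK1 hK2
    rw [Int.abs_eq_natAbs] at habs
    exact_mod_cast habs
  · -- the case m = n
    subst heq
    have hdet : M.det ≠ 0 := det_ne_zero_of_rank_eq M hrank
    have hdy : M.det • x = M.cramer b := by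
      rw [Matrix.cramer_eq_adjugate_mulVec, ← hMx, Matrix.mulVec_mulVec, Matrix.adjugate_mul,
        Matrix.smul_mulVec, Matrix.one_mulVec]
    refine ⟨x, hx, hMx, ?_⟩
    intro j
    have h11 : M.det * x j = M.cramer b j := by
      have h := congrFun hdy j
      simpa [smul_eq_mul] using h
    have h12 : |x j| ≤ |M.det * x j| := by
      rw [abs_mul]
      exact le_mul_of_one_le_left (abs_nonneg _) (Int.one_le_abs hdet)
    have hcr : |M.cramer b j| ≤ (m.factorial : ℤ) * ((K2 : ℤ) * (K1 : ℤ) ^ (m - 1)) := by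
      rw [Matrix.cramer_apply]
      have hcol := abs_det_le_colbound (M.updateCol j b)
        (Function.update (fun _ : Fin m => (K1 : ℤ)) j (K2 : ℤ)) ?_
      · refine hcol.trans ?_
        have hprod : ∏ l, Function.update (fun _ : Fin m => (K1 : ℤ)) j (K2 : ℤ) l
            = (K2 : ℤ) * (K1 : ℤ) ^ (m - 1) := by
          rw [Finset.prod_update_of_mem (Finset.mem_univ j), Finset.prod_const]
          congr 1
          rw [Finset.card_sdiff_of_subset (Finset.subset_univ {j}), Finset.card_singleton,
            Finset.card_univ, Fintype.card_fin]
        rw [hprod, Fintype.card_fin]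
      · intro i' l
        rw [Matrix.updateCol_apply]
        rcases eq_or_ne l j with h | h
        · rw [if_pos h, Function.update_apply, if_pos h]
          exact hb' i'
        · rw [if_neg h, Function.update_apply, if_neg h]
          exact hM' _ _
    have hnumN : m.factorial * (K2 * K1 ^ (m - 1)) ≤
        (m - m) * (m ^ m * m ^ m * K1 ^ (2 * m) + m ^ m * K1 ^ m)
          + m ^ m * K1 ^ (m - 1) * K2 := by
      have h1 : m.factorial * (K2 * K1 ^ (m - 1)) = m.factorial * K1 ^ (m - 1) * K2 := by
        ring
      have h2 : m.factorial * K1 ^ (m - 1) * K2 ≤ m ^ m * K1 ^ (m - 1) * K2 :=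
        Nat.mul_le_mul_right _ (Nat.mul_le_mul_right _ (Nat.factorial_le_pow m))
      omega
    have habs : |x j| ≤ (((m - m) * (m ^ m * m ^ m * K1 ^ (2 * m) + m ^ m * K1 ^ m)
        + m ^ m * K1 ^ (m - 1) * K2 : ℕ) : ℤ) := by
      refine (h12.trans (h11 ▸ hcr)).trans ?_
      exact_mod_cast hnumN
    rw [Int.abs_eq_natAbs] at habs
    exact_mod_cast habs

end AuxPositiveSolution
end
end

section
/- Let M be an m-by-n integer matrix and b ∈ ℤ^m. Suppose all entries of M are at most K_1 in absolute value and ‖b‖_∞ ≤ K_2, where K_1, K_2 ≥ 1. If there exists x ∈ ℤ_{>0}^n with M x = b, then there exists y ∈ ℤ_{>0}^n with M y = b and ‖y‖_∞ ≤ 2 n^{m+1} m^m K_1^{2m} + m^m K_1^{m−1} K_2. -/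
open Pointwise MeasureTheory

noncomputable section

section AuxPositiveSolution

open Matrix

lemma fact_le_pow_pred : ∀ t : ℕ, t.factorial ≤ t ^ (t - 1) := by
  intro t
  induction t with
  | zero => simp
  | succ u ih =>
    rcases Nat.eq_zero_or_pos u with h | h
    · subst h; simp
    · calc (u+1).factorial = (u+1) * u.factorial := rfl
        _ ≤ (u+1) * u ^ (u-1) := Nat.mul_le_mul_left _ ih
        _ ≤ (u+1) * (u+1) ^ (u-1) := Nat.mul_le_mul_left _ (Nat.pow_le_pow_left (by omega) _)
        _ = (u+1) ^ (u - 1 + 1) := by rw [← pow_succ']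
        _ = (u+1) ^ (u + 1 - 1) := by congr 1; omega

lemma natAbs_finset_prod {ι : Type*} (s : Finset ι) (f : ι → ℤ) :
    (∏ i ∈ s, f i).natAbs = ∏ i ∈ s, (f i).natAbs :=
  map_prod Int.natAbsHom f s

lemma aux_det_bound {s : ℕ} (A : Matrix (Fin s) (Fin s) ℤ) (c : Fin s → ℕ)
    (h : ∀ i j, (A i j).natAbs ≤ c i) :
    A.det.natAbs ≤ s.factorial * ∏ i, c i := by
  rw [Matrix.det_apply]
  calc (∑ σ : Equiv.Perm (Fin s), Equiv.Perm.sign σ • ∏ i, A (σ i) i).natAbs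
      ≤ ∑ σ : Equiv.Perm (Fin s), (Equiv.Perm.sign σ • ∏ i, A (σ i) i).natAbs := by
        exact nat_abs_sum_le _ _
    _ ≤ ∑ _σ : Equiv.Perm (Fin s), ∏ i, c i := by
        apply Finset.sum_le_sum
        intro σ _
        have h1 : (Equiv.Perm.sign σ • ∏ i, A (σ i) i).natAbs = (∏ i, A (σ i) i).natAbs := by
          rcases Int.units_eq_one_or (Equiv.Perm.sign σ) with h' | h' <;>
            simp [h', Units.smul_def]
        rw [h1, natAbs_finset_prod]
        calc ∏ i, (A (σ i) i).natAbs ≤ ∏ i, c (σ i) :=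
              Finset.prod_le_prod (fun _ _ => Nat.zero_le _) (fun i _ => h (σ i) i)
          _ = ∏ i, c i := Equiv.prod_comp σ c
    _ = s.factorial * ∏ i, c i := by
        rw [Finset.sum_const, Finset.card_univ, Fintype.card_perm, Fintype.card_fin, smul_eq_mul]

lemma aux_rows {m s : ℕ} (A : Matrix (Fin m) (Fin s) ℚ)
    (hA : LinearIndependent ℚ (fun k : Fin s => Aᵀ k)) :
    ∃ r : Fin s → Fin m, (A.submatrix r id).det ≠ 0 := by
  classical
  have hrankT : Aᵀ.rank = s := by
    have := LinearIndependent.rank_matrix (M := Aᵀ) hA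
    simpa using this
  have hrank : A.rank = s := by rw [← Matrix.rank_transpose]; exact hrankT
  have hfinrank : Module.finrank ℚ (Submodule.span ℚ (Set.range A)) = s := by
    exact (Matrix.rank_eq_finrank_span_row A).symm.trans hrank
  have hspan : Submodule.span ℚ (Set.range A) = ⊤ := by
    apply Submodule.eq_top_of_finrank_eq
    rw [hfinrank, Module.finrank_pi]; simp
  obtain ⟨t, hts, htsp, hti⟩ := exists_linearIndependent ℚ (Set.range A)
  rw [hspan] at htsp
  have htfin : t.Finite := by
    have := hti.lt_aleph0_of_finite
    exact Cardinal.lt_aleph0_iff_set_finite.mp (by simpa using this)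
  haveI := htfin.fintype
  have hcard : Fintype.card t = s := by
    have h1 := finrank_span_set_eq_card hti
    rw [htsp] at h1
    rw [Set.toFinset_card] at h1
    rw [← h1, finrank_top, Module.finrank_pi]; simp
  have e : Fin s ≃ t := (Fintype.equivFinOfCardEq hcard).symm
  have hchoice : ∀ k : Fin s, ∃ i : Fin m, A i = (e k : Fin s → ℚ) := fun k => hts (e k).2
  choose r hr using hchoice
  refine ⟨r, ?_⟩
  intro h0
  obtain ⟨v, hv0, hv⟩ := (Matrix.exists_vecMul_eq_zero_iff).mpr h0
  have hind : LinearIndependent ℚ (fun k : Fin s => ((e k : t) : Fin s → ℚ)) :=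
    hti.comp e e.injective
  have : ∀ k, v k = 0 := by
    rw [Fintype.linearIndependent_iff] at hind
    apply hind
    funext j
    have := congrFun hv j
    simp only [Matrix.vecMul, dotProduct] at this
    simpa [Finset.sum_apply, hr, Matrix.submatrix_apply] using this
  exact hv0 (funext this)

def colIndep (m n : ℕ) (M : Matrix (Fin m) (Fin n) ℤ) (S : Finset (Fin n)) : Prop :=
  ∀ g : Fin n → ℚ, (∀ j ∉ S, g j = 0) → (∀ i, ∑ j, g j * (M i j : ℚ) = 0) → ∀ j, g j = 0

lemma sum_over_finset {n : ℕ} (S : Finset (Fin n)) {α : Type*} [AddCommMonoid α] (f : Fin n → α) :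
    ∑ k : Fin S.card, f (S.equivFin.symm k : Fin n) = ∑ j ∈ S, f j := by
  rw [← Finset.sum_coe_sort S f]
  exact Equiv.sum_comp S.equivFin.symm (fun j : {x // x ∈ S} => f j)

lemma colIndep_li {m n : ℕ} (M : Matrix (Fin m) (Fin n) ℤ) {S : Finset (Fin n)}
    (h : colIndep m n M S) :
    LinearIndependent ℚ
      (fun k : Fin S.card => (fun i => (M i (S.equivFin.symm k : Fin n) : ℚ) : Fin m → ℚ)) := by
  classical
  rw [Fintype.linearIndependent_iff]
  intro g hg
  set G : Fin n → ℚ := fun j => if h : j ∈ S then g (S.equivFin ⟨j, h⟩) else 0 with hGdef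
  have hG : ∀ j, G j = 0 := by
    apply h
    · intro j hj; simp only [hGdef, dif_neg hj]
    · intro i
      have h1 : ∀ j ∈ Finset.univ \ S, G j * (M i j : ℚ) = 0 := by
        intro j hj
        simp only [Finset.mem_sdiff] at hj
        simp [hGdef, dif_neg hj.2]
      calc ∑ j, G j * (M i j : ℚ) = ∑ j ∈ S, G j * (M i j : ℚ) := by
            rw [← Finset.sum_subset (Finset.subset_univ S)]
            intro j _ hj
            simp [hGdef, dif_neg hj]
        _ = ∑ k : Fin S.card, G (S.equivFin.symm k : Fin n) *
              (M i (S.equivFin.symm k : Fin n) : ℚ) :=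
            (sum_over_finset S _).symm
        _ = ∑ k : Fin S.card, g k * (M i (S.equivFin.symm k : Fin n) : ℚ) := by
            apply Finset.sum_congr rfl
            intro k _
            congr 1
            simp only [hGdef, dif_pos (S.equivFin.symm k).2]
            congr 1
            rw [show (⟨(S.equivFin.symm k : Fin n), (S.equivFin.symm k).2⟩ : {x // x ∈ S})
                  = S.equivFin.symm k from Subtype.ext rfl, Equiv.apply_symm_apply]
        _ = 0 := by
            have := congrFun hg i
            simpa [Finset.sum_apply] using this
  intro k
  have := hG (S.equivFin.symm k : Fin n)
  simp only [hGdef, dif_pos (S.equivFin.symm k).2] at this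
  rwa [show (⟨(S.equivFin.symm k : Fin n), (S.equivFin.symm k).2⟩ : {x // x ∈ S})
        = S.equivFin.symm k from Subtype.ext rfl, Equiv.apply_symm_apply] at this

lemma colIndep_card {m n : ℕ} (M : Matrix (Fin m) (Fin n) ℤ) {S : Finset (Fin n)}
    (h : colIndep m n M S) : S.card ≤ m := by
  have := (colIndep_li M h).fintype_card_le_finrank
  simpa [Module.finrank_pi] using this

lemma master {m n K1 : ℕ} (M : Matrix (Fin m) (Fin n) ℤ)
    (hM : ∀ i j, (M i j).natAbs ≤ K1)
    {S : Finset (Fin n)} (hS : colIndep m n M S)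
    (c : Fin n → ℚ) (hc : ∀ j ∉ S, c j = 0)
    (b' : Fin m → ℤ) (hb' : ∀ i, ∑ j, c j * (M i j : ℚ) = (b' i : ℚ))
    (R : ℕ) (hR : ∀ i, (b' i).natAbs ≤ R) :
    ∃ D : ℤ, D ≠ 0 ∧ D.natAbs ≤ S.card.factorial * K1 ^ S.card ∧
      ∃ z : Fin n → ℤ, (∀ j ∉ S, z j = 0) ∧
        (∀ j, (z j).natAbs ≤ S.card * (S.card.factorial * K1 ^ (S.card - 1)) * R) ∧
        (∀ j, (z j : ℚ) = (D : ℚ) * c j) ∧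
        (∀ i, ∑ j, z j * M i j = D * b' i) := by
  classical
  have hAqli : LinearIndependent ℚ
      (fun k : Fin S.card =>
        (Matrix.of fun i k => (M i ((S.equivFin.symm k : {x // x ∈ S}) : Fin n) : ℚ) :
          Matrix (Fin m) (Fin S.card) ℚ)ᵀ k) := colIndep_li M hS
  obtain ⟨r, hdet⟩ := aux_rows _ hAqli
  set e : Fin S.card → Fin n := fun k => ((S.equivFin.symm k : {x // x ∈ S}) : Fin n) with he
  set Bz : Matrix (Fin S.card) (Fin S.card) ℤ := Matrix.of fun t k => M (r t) (e k) with hBz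
  have hBq : ((Matrix.of fun i k => (M i (e k) : ℚ)) :
      Matrix (Fin m) (Fin S.card) ℚ).submatrix r id = (Int.castRingHom ℚ).mapMatrix Bz := by
    ext t k
    simp [hBz, Matrix.submatrix_apply, Matrix.map_apply]
  rw [hBq] at hdet
  have hdetz : Bz.det ≠ 0 := by
    intro h0
    apply hdet
    rw [← RingHom.map_det, h0]
    simp
  have hDbound : Bz.det.natAbs ≤ S.card.factorial * K1 ^ S.card := by
    have := aux_det_bound Bz (fun _ => K1) (fun i j => hM _ _)
    simpa [Finset.prod_const] using this
  set c' : Fin S.card → ℚ := fun k => c (e k) with hc'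
  have hmv : ((Int.castRingHom ℚ).mapMatrix Bz).mulVec c' = fun t => (b' (r t) : ℚ) := by
    funext t
    show ∑ k, (M (r t) (e k) : ℚ) * c' k = (b' (r t) : ℚ)
    calc ∑ k, (M (r t) (e k) : ℚ) * c' k
        = ∑ k : Fin S.card, (fun j => c j * (M (r t) j : ℚ)) (e k) := by
          apply Finset.sum_congr rfl; intro k _; exact mul_comm _ _
      _ = ∑ j ∈ S, c j * (M (r t) j : ℚ) := sum_over_finset S (fun j => c j * (M (r t) j : ℚ))
      _ = ∑ j, c j * (M (r t) j : ℚ) := by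
          apply Finset.sum_subset (Finset.subset_univ S)
          intro j _ hj; rw [hc j hj, zero_mul]
      _ = (b' (r t) : ℚ) := hb' (r t)
  set u : Fin S.card → ℤ := fun k => ∑ t, Bz.adjugate k t * b' (r t) with hu
  have hucast : ∀ k, (u k : ℚ) = (Bz.det : ℚ) * c' k := by
    have key : ((Int.castRingHom ℚ).mapMatrix Bz).adjugate.mulVec
        (((Int.castRingHom ℚ).mapMatrix Bz).mulVec c') = ((Bz.det : ℚ)) • c' := by
      rw [Matrix.mulVec_mulVec, Matrix.adjugate_mul, Matrix.smul_mulVec,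
        Matrix.one_mulVec, ← RingHom.map_det]
      rfl
    rw [hmv] at key
    intro k
    have hk := congrFun key k
    simp only [Matrix.mulVec, dotProduct, Pi.smul_apply, smul_eq_mul] at hk
    rw [← hk, hu]
    push_cast
    apply Finset.sum_congr rfl
    intro t _
    congr 1
    rw [← RingHom.map_adjugate]
    rfl
  have hubound : ∀ k, (u k).natAbs ≤ S.card * (S.card.factorial * K1 ^ (S.card - 1)) * R := by
    intro k
    calc (u k).natAbs ≤ ∑ t, (Bz.adjugate k t * b' (r t)).natAbs := nat_abs_sum_le _ _
      _ ≤ ∑ _t : Fin S.card, (S.card.factorial * K1 ^ (S.card - 1)) * R := by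
        apply Finset.sum_le_sum
        intro t _
        rw [Int.natAbs_mul]
        apply Nat.mul_le_mul _ (hR _)
        rw [Matrix.adjugate_apply]
        have hb := aux_det_bound (Bz.updateRow t (Pi.single k 1))
          (fun i => if i = t then 1 else K1) ?_
        · calc (Bz.updateRow t (Pi.single k 1)).det.natAbs
              ≤ S.card.factorial * ∏ i, (if i = t then 1 else K1) := hb
            _ = S.card.factorial * K1 ^ (S.card - 1) := by
              congr 1
              rw [← Finset.mul_prod_erase _ _ (Finset.mem_univ t), if_pos rfl, one_mul,
                Finset.prod_congr rfl (fun i hi => if_neg (Finset.ne_of_mem_erase hi)),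
                Finset.prod_const, Finset.card_erase_of_mem (Finset.mem_univ t),
                Finset.card_univ, Fintype.card_fin]
        · intro i j
          rcases eq_or_ne i t with rfl | hit
          · simp only [if_pos rfl, Matrix.updateRow_self]
            rcases eq_or_ne j k with rfl | hjk
            · simp
            · simp [Pi.single_eq_of_ne hjk]
          · simp only [if_neg hit, Matrix.updateRow_ne hit]
            exact hM _ _
      _ = S.card * (S.card.factorial * K1 ^ (S.card - 1)) * R := by
        rw [Finset.sum_const, Finset.card_univ, Fintype.card_fin, smul_eq_mul]
        ring
  have heq : ∀ j (h : j ∈ S), e (S.equivFin ⟨j, h⟩) = j := by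
    intro j h
    show ((S.equivFin.symm (S.equivFin ⟨j, h⟩) : {x // x ∈ S}) : Fin n) = j
    rw [Equiv.symm_apply_apply]
  refine ⟨Bz.det, hdetz, hDbound, fun j => if h : j ∈ S then u (S.equivFin ⟨j, h⟩) else 0,
    fun j hj => dif_neg hj, ?_, ?_, ?_⟩
  · intro j
    by_cases h : j ∈ S
    · simp only [dif_pos h]; exact hubound _
    · simp only [dif_neg h]; simp
  · intro j
    by_cases h : j ∈ S
    · simp only [dif_pos h]
      rw [hucast]
      congr 1
      show c (e (S.equivFin ⟨j, h⟩)) = c j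
      rw [heq]
    · simp only [dif_neg h]
      rw [hc j h, mul_zero]
      simp
  · intro i
    have key : ((∑ j, (if h : j ∈ S then u (S.equivFin ⟨j, h⟩) else 0) * M i j : ℤ) : ℚ)
        = ((Bz.det * b' i : ℤ) : ℚ) := by
      push_cast
      calc ∑ j, ((if h : j ∈ S then u (S.equivFin ⟨j, h⟩) else 0 : ℤ) : ℚ) * (M i j : ℚ)
          = ∑ j, (Bz.det : ℚ) * (c j * (M i j : ℚ)) := by
            apply Finset.sum_congr rfl
            intro j _
            by_cases h : j ∈ S
            · rw [dif_pos h, hucast, mul_assoc]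
              congr 2
              show c (e (S.equivFin ⟨j, h⟩)) = c j
              rw [heq]
            · rw [dif_neg h, hc j h]; simp
        _ = (Bz.det : ℚ) * ∑ j, c j * (M i j : ℚ) := by rw [Finset.mul_sum]
        _ = (Bz.det : ℚ) * (b' i : ℚ) := by rw [hb' i]
      congr 1
      exact RingHom.map_det (Int.castRingHom ℚ) Bz
    exact_mod_cast key

lemma arith_core {t nn mm K1 : ℕ} (hK1 : 1 ≤ K1) (ht1 : t < nn) (ht2 : t ≤ mm) :
    (t + 1).factorial * K1 ^ t ≤ nn ^ mm * K1 ^ mm := by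
  have h1 : (t + 1).factorial ≤ (t + 1) ^ t := by simpa using fact_le_pow_pred (t + 1)
  calc (t + 1).factorial * K1 ^ t ≤ (t + 1) ^ t * K1 ^ t := Nat.mul_le_mul_right _ h1
    _ ≤ nn ^ t * K1 ^ t := Nat.mul_le_mul_right _ (Nat.pow_le_pow_left (by omega) _)
    _ ≤ nn ^ mm * K1 ^ mm :=
        Nat.mul_le_mul (Nat.pow_le_pow_right (by omega) ht2) (Nat.pow_le_pow_right hK1 ht2)

lemma kernel_of_not_colIndep {m n K1 : ℕ} (M : Matrix (Fin m) (Fin n) ℤ)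
    (hM : ∀ i j, (M i j).natAbs ≤ K1) (hK1 : 1 ≤ K1)
    {S : Finset (Fin n)} (hS : ¬ colIndep m n M S) :
    ∃ z : Fin n → ℤ, (∃ j, z j ≠ 0) ∧ (∀ j ∉ S, z j = 0) ∧
      (∀ j, (z j).natAbs ≤ n ^ m * K1 ^ m) ∧ (∀ i, ∑ j, z j * M i j = 0) := by
  classical
  set 𝒯 := S.powerset.filter (fun T => colIndep m n M T) with h𝒯
  have hne : 𝒯.Nonempty := by
    refine ⟨∅, Finset.mem_filter.mpr ⟨Finset.empty_mem_powerset S, ?_⟩⟩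
    intro g hg _ j
    exact hg j (Finset.notMem_empty j)
  obtain ⟨T, hT𝒯, hTmax⟩ := Finset.exists_max_image 𝒯 Finset.card hne
  have hTS : T ⊆ S := Finset.mem_powerset.mp (Finset.mem_filter.mp hT𝒯).1
  have hTi : colIndep m n M T := (Finset.mem_filter.mp hT𝒯).2
  have hTne : T ≠ S := by rintro rfl; exact hS hTi
  obtain ⟨j₀, hj₀S, hj₀T⟩ : ∃ j₀ ∈ S, j₀ ∉ T := by
    by_contra h
    push_neg at h
    exact hTne (Finset.Subset.antisymm hTS h)
  have hT' : ¬ colIndep m n M (insert j₀ T) := by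
    intro hcol
    have hmem : insert j₀ T ∈ 𝒯 := Finset.mem_filter.mpr
      ⟨Finset.mem_powerset.mpr (Finset.insert_subset hj₀S hTS), hcol⟩
    have := hTmax _ hmem
    rw [Finset.card_insert_of_notMem hj₀T] at this
    omega
  rw [colIndep] at hT'
  push_neg at hT'
  obtain ⟨g, hg0, hgsum, j₁, hj₁⟩ := hT'
  have hnotmem : ∀ j, j ∉ T → j ≠ j₀ → j ∉ insert j₀ T := by
    intro j hj hjj
    simp [Finset.mem_insert, hjj, hj]
  have hgj₀ : g j₀ ≠ 0 := by
    intro h0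
    apply hj₁
    refine hTi g (fun j hj => ?_) hgsum j₁
    by_cases hjj : j = j₀
    · subst hjj; exact h0
    · exact hg0 j (hnotmem j hj hjj)
  set c : Fin n → ℚ := fun j => if j = j₀ then 0 else -(g j) / (g j₀) with hcdef
  have hc : ∀ j ∉ T, c j = 0 := by
    intro j hj
    by_cases hjj : j = j₀
    · simp [hcdef, hjj]
    · simp [hcdef, hjj, hg0 j (hnotmem j hj hjj)]
  have hbrep : ∀ i, ∑ j, c j * (M i j : ℚ) = ((fun i' => M i' j₀) i : ℚ) := by
    intro i
    have hsplit : g j₀ * (M i j₀ : ℚ) + ∑ j ∈ Finset.univ.erase j₀, g j * (M i j : ℚ) = 0 := by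
      rw [Finset.add_sum_erase Finset.univ (fun j => g j * (M i j : ℚ)) (Finset.mem_univ j₀)]
      exact hgsum i
    have herase : ∑ j ∈ Finset.univ.erase j₀, g j * (M i j : ℚ) = -(g j₀ * (M i j₀ : ℚ)) := by
      linarith
    calc ∑ j, c j * (M i j : ℚ)
        = ∑ j ∈ Finset.univ.erase j₀, c j * (M i j : ℚ) := by
          rw [← Finset.add_sum_erase Finset.univ (fun j => c j * (M i j : ℚ))
            (Finset.mem_univ j₀)]
          simp [hcdef]
      _ = ∑ j ∈ Finset.univ.erase j₀, (-1 / g j₀) * (g j * (M i j : ℚ)) := by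
          apply Finset.sum_congr rfl
          intro j hj
          have hjj : j ≠ j₀ := Finset.ne_of_mem_erase hj
          rw [hcdef]
          simp only [if_neg hjj]
          field_simp
      _ = (-1 / g j₀) * ∑ j ∈ Finset.univ.erase j₀, g j * (M i j : ℚ) := by
          rw [Finset.mul_sum]
      _ = (-1 / g j₀) * -(g j₀ * (M i j₀ : ℚ)) := by rw [herase]
      _ = ((fun i' => M i' j₀) i : ℚ) := by field_simp
  obtain ⟨D, hD0, hDb, z, hz0, hzb, hzc, hzeq⟩ :=
    master M hM hTi c hc (fun i' => M i' j₀) hbrep K1 (fun i' => hM i' j₀)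
  have htm : T.card ≤ m := colIndep_card M hTi
  have htn : T.card < n := by
    have h1 : insert j₀ T ⊆ Finset.univ := Finset.subset_univ _
    have h2 := Finset.card_le_card h1
    rw [Finset.card_insert_of_notMem hj₀T, Finset.card_univ, Fintype.card_fin] at h2
    omega
  have hzj₀ : z j₀ = 0 := hz0 j₀ hj₀T
  refine ⟨fun j => if j = j₀ then -D else z j, ⟨j₀, by simp [hD0]⟩, ?_, ?_, ?_⟩
  · intro j hj
    have hjj : j ≠ j₀ := fun h => hj (h ▸ hj₀S)
    simp only [if_neg hjj]
    exact hz0 j (fun hT => hj (hTS hT))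
  · intro j
    by_cases hjj : j = j₀
    · simp only [if_pos hjj, Int.natAbs_neg]
      calc D.natAbs ≤ T.card.factorial * K1 ^ T.card := hDb
        _ ≤ (T.card + 1).factorial * K1 ^ T.card :=
            Nat.mul_le_mul_right _ (Nat.factorial_le (by omega))
        _ ≤ n ^ m * K1 ^ m := arith_core hK1 htn htm
    · simp only [if_neg hjj]
      calc (z j).natAbs ≤ T.card * (T.card.factorial * K1 ^ (T.card - 1)) * K1 := hzb j
        _ ≤ (T.card + 1).factorial * K1 ^ T.card := by
            rcases Nat.eq_zero_or_pos T.card with h0 | h0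
            · rw [h0]; simp
            · have : K1 ^ (T.card - 1) * K1 = K1 ^ T.card := by
                rw [← pow_succ]
                congr 1
                omega
              calc T.card * (T.card.factorial * K1 ^ (T.card - 1)) * K1
                  = (T.card * T.card.factorial) * (K1 ^ (T.card - 1) * K1) := by ring
                _ = (T.card * T.card.factorial) * K1 ^ T.card := by rw [this]
                _ ≤ (T.card + 1).factorial * K1 ^ T.card := by
                    apply Nat.mul_le_mul_right
                    calc T.card * T.card.factorial ≤ (T.card + 1) * T.card.factorial :=
                          Nat.mul_le_mul_right _ (by omega)
                      _ = (T.card + 1).factorial := by rw [Nat.factorial_succ]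
        _ ≤ n ^ m * K1 ^ m := arith_core hK1 htn htm
  · intro i
    have hterm : ∀ j : Fin n, (if j = j₀ then -D else z j) * M i j
        = z j * M i j + (if j = j₀ then -D * M i j else 0) := by
      intro j
      by_cases hjj : j = j₀
      · subst hjj
        rw [if_pos rfl, if_pos rfl, hzj₀]
        ring
      · rw [if_neg hjj, if_neg hjj, add_zero]
    calc ∑ j, (if j = j₀ then -D else z j) * M i j
        = ∑ j, (z j * M i j + (if j = j₀ then -D * M i j else 0)) :=
          Finset.sum_congr rfl (fun j _ => hterm j)
      _ = (∑ j, z j * M i j) + ∑ j, (if j = j₀ then -D * M i j else 0) := Finset.sum_add_distrib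
      _ = D * M i j₀ + -D * M i j₀ := by
          rw [hzeq i, Finset.sum_ite_eq' Finset.univ j₀ (fun j => -D * M i j)]
          simp
      _ = 0 := by ring

end AuxPositiveSolution

/-- A positive integer solution of `My = b` with controlled size, general case. -/
theorem positive_solution_general (m n : ℕ)
    (M : Matrix (Fin m) (Fin n) ℤ)
    (b : Fin m → ℤ) (K1 K2 : ℕ) (hK1 : 1 ≤ K1) (hK2 : 1 ≤ K2)
    (hM : ∀ i j, (M i j).natAbs ≤ K1) (hb : ∀ i, (b i).natAbs ≤ K2)
    (x : Fin n → ℤ) (hx : ∀ j, 0 < x j) (hMx : M.mulVec x = b) :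
    ∃ y : Fin n → ℤ, (∀ j, 0 < y j) ∧ M.mulVec y = b ∧
      ∀ j, (y j).natAbs ≤
        2 * n ^ (m + 1) * m ^ m * K1 ^ (2 * m) + m ^ m * K1 ^ (m - 1) * K2 := by
  classical
  set C : ℕ := n ^ m * K1 ^ m with hC
  set Bnd : ℕ := 2 * n ^ (m + 1) * m ^ m * K1 ^ (2 * m) + m ^ m * K1 ^ (m - 1) * K2 with hBnd
  have hCB : C ≤ Bnd := by
    rcases Nat.eq_zero_or_pos m with hm | hm
    · subst hm
      have h1 : C = 1 := by rw [hC]; simp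
      have h2 : Bnd = 2 * n + K2 := by
        rw [hBnd]
        norm_num
      omega
    · rcases Nat.eq_zero_or_pos n with hn | hn
      · have : C = 0 := by
          rw [hC, hn, Nat.zero_pow (by omega)]
          ring
        omega
      · have h1 : C ≤ 2 * n ^ (m + 1) * m ^ m * K1 ^ (2 * m) := by
          rw [hC]
          calc n ^ m * K1 ^ m ≤ n ^ (m + 1) * K1 ^ (2 * m) :=
                Nat.mul_le_mul (Nat.pow_le_pow_right hn (by omega))
                  (Nat.pow_le_pow_right hK1 (by omega))
            _ = 1 * n ^ (m + 1) * 1 * K1 ^ (2 * m) := by ring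
            _ ≤ 2 * n ^ (m + 1) * m ^ m * K1 ^ (2 * m) := by
                have hmm : 1 ≤ m ^ m := Nat.one_le_pow _ _ hm
                apply Nat.mul_le_mul _ (le_refl _)
                apply Nat.mul_le_mul _ hmm
                apply Nat.mul_le_mul _ (le_refl _)
                omega
        omega
  have hterm : ∀ s : ℕ, 1 ≤ s → s ≤ m →
      s * (s.factorial * K1 ^ (s - 1)) * (K2 + n * C * K1) ≤ Bnd := by
    intro s hs1 hsm
    have hm1 : 1 ≤ m := le_trans hs1 hsm
    have h1 : s * s.factorial ≤ m ^ m := by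
      calc s * s.factorial ≤ s * s ^ (s - 1) := Nat.mul_le_mul_left _ (fact_le_pow_pred s)
        _ = s ^ (s - 1 + 1) := by rw [← pow_succ']
        _ = s ^ s := by congr 1; omega
        _ ≤ m ^ s := Nat.pow_le_pow_left hsm _
        _ ≤ m ^ m := Nat.pow_le_pow_right hm1 hsm
    have h2 : K1 ^ (s - 1) ≤ K1 ^ (m - 1) := Nat.pow_le_pow_right hK1 (by omega)
    have hKK : K1 ^ (m - 1) * (n * (n ^ m * K1 ^ m) * K1) = n ^ (m + 1) * K1 ^ (2 * m) := by
      have h3 : K1 ^ (m - 1) * K1 ^ m * K1 = K1 ^ (2 * m) := by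
        rw [← pow_add, ← pow_succ]
        congr 1
        omega
      calc K1 ^ (m - 1) * (n * (n ^ m * K1 ^ m) * K1)
          = (n * n ^ m) * (K1 ^ (m - 1) * K1 ^ m * K1) := by ring
        _ = (n * n ^ m) * K1 ^ (2 * m) := by rw [h3]
        _ = n ^ (m + 1) * K1 ^ (2 * m) := by rw [← pow_succ']
    calc s * (s.factorial * K1 ^ (s - 1)) * (K2 + n * C * K1)
        = (s * s.factorial) * K1 ^ (s - 1) * (K2 + n * C * K1) := by ring
      _ ≤ m ^ m * K1 ^ (m - 1) * (K2 + n * C * K1) :=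
          Nat.mul_le_mul (Nat.mul_le_mul h1 h2) (le_refl _)
      _ = m ^ m * K1 ^ (m - 1) * K2 + m ^ m * (K1 ^ (m - 1) * (n * (n ^ m * K1 ^ m) * K1)) := by
          rw [hC]; ring
      _ = m ^ m * K1 ^ (m - 1) * K2 + m ^ m * (n ^ (m + 1) * K1 ^ (2 * m)) := by rw [hKK]
      _ ≤ Bnd := by
          rw [hBnd]
          have h4 : m ^ m * (n ^ (m + 1) * K1 ^ (2 * m))
              ≤ 2 * n ^ (m + 1) * m ^ m * K1 ^ (2 * m) := by
            calc m ^ m * (n ^ (m + 1) * K1 ^ (2 * m))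
                = 1 * (n ^ (m + 1) * m ^ m * K1 ^ (2 * m)) := by ring
              _ ≤ 2 * (n ^ (m + 1) * m ^ m * K1 ^ (2 * m)) := by
                  apply Nat.mul_le_mul _ (le_refl _); omega
              _ = 2 * n ^ (m + 1) * m ^ m * K1 ^ (2 * m) := by ring
          omega
  have key : ∀ N : ℕ, ∀ x : Fin n → ℤ, (∀ j, 0 < x j) → M.mulVec x = b →
      (n + 1) * (∑ j, (x j).toNat) +
        (Finset.univ.filter (fun j => (C : ℤ) < x j)).card ≤ N →
      ∃ y : Fin n → ℤ, (∀ j, 0 < y j) ∧ M.mulVec y = b ∧ ∀ j, (y j).natAbs ≤ Bnd := by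
    intro N
    induction N using Nat.strong_induction_on with
    | _ N ih =>
    intro x hx hMx hmeas
    have hMx' : ∀ i, ∑ j, x j * M i j = b i := by
      intro i
      have := congrFun hMx i
      simpa [Matrix.mulVec, dotProduct, mul_comm] using this
    set S : Finset (Fin n) := Finset.univ.filter (fun j => (C : ℤ) < x j) with hSdef
    have hSmem : ∀ j, j ∈ S ↔ (C : ℤ) < x j := by
      intro j; rw [hSdef]; simp
    have hcardS : S.card ≤ n := by
      calc S.card ≤ Finset.univ.card := Finset.card_le_card (Finset.subset_univ S)
        _ = n := by simp
    by_cases hind : colIndep m n M S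
    · -- terminal case
      refine ⟨x, hx, hMx, ?_⟩
      intro j
      by_cases hjS : j ∈ S
      · have hS1 : 1 ≤ S.card := Finset.card_pos.mpr ⟨j, hjS⟩
        have hSm : S.card ≤ m := colIndep_card M hind
        set Sc : Finset (Fin n) := Finset.univ.filter (fun j' => ¬ (C : ℤ) < x j') with hScdef
        set b' : Fin m → ℤ := fun i => b i - ∑ j' ∈ Sc, x j' * M i j' with hb'def
        have hb' : ∀ i, ∑ j', (if j' ∈ S then (x j' : ℚ) else 0) * (M i j' : ℚ) = (b' i : ℚ) := by
          intro i
          have hsplit : (∑ j' ∈ S, x j' * M i j') + (∑ j' ∈ Sc, x j' * M i j') = b i := by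
            rw [hSdef, hScdef, Finset.sum_filter_add_sum_filter_not]
            exact hMx' i
          have hLHS : ∑ j', (if j' ∈ S then (x j' : ℚ) else 0) * (M i j' : ℚ)
              = ∑ j' ∈ S, (x j' : ℚ) * (M i j' : ℚ) := by
            calc ∑ j', (if j' ∈ S then (x j' : ℚ) else 0) * (M i j' : ℚ)
                = ∑ j', (if j' ∈ S then (x j' : ℚ) * (M i j' : ℚ) else 0) := by
                  apply Finset.sum_congr rfl
                  intro j' _
                  by_cases h : j' ∈ S
                  · rw [if_pos h, if_pos h]
                  · rw [if_neg h, if_neg h, zero_mul]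
              _ = ∑ j' ∈ Finset.univ ∩ S, (x j' : ℚ) * (M i j' : ℚ) :=
                  Finset.sum_ite_mem Finset.univ S (fun j' => (x j' : ℚ) * (M i j' : ℚ))
              _ = ∑ j' ∈ S, (x j' : ℚ) * (M i j' : ℚ) := by rw [Finset.univ_inter]
          rw [hLHS, hb'def]
          have hcast : ((b i - ∑ j' ∈ Sc, x j' * M i j' : ℤ) : ℚ)
              = (b i : ℚ) - ∑ j' ∈ Sc, (x j' : ℚ) * (M i j' : ℚ) := by
            push_cast
            ring
          rw [hcast, ← hsplit]
          push_cast
          ring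
        have hR : ∀ i, (b' i).natAbs ≤ K2 + n * C * K1 := by
          intro i
          rw [hb'def]
          calc (b i - ∑ j' ∈ Sc, x j' * M i j').natAbs
              ≤ (b i).natAbs + (∑ j' ∈ Sc, x j' * M i j').natAbs := Int.natAbs_sub_le _ _
            _ ≤ K2 + n * (C * K1) := by
                apply Nat.add_le_add (hb i)
                calc (∑ j' ∈ Sc, x j' * M i j').natAbs
                    ≤ ∑ j' ∈ Sc, (x j' * M i j').natAbs := nat_abs_sum_le _ _
                  _ ≤ ∑ _j' ∈ Sc, C * K1 := by
                      apply Finset.sum_le_sum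
                      intro j' hj'
                      rw [Int.natAbs_mul]
                      apply Nat.mul_le_mul _ (hM i j')
                      have hj'2 : ¬ (C : ℤ) < x j' := by
                        rw [hScdef] at hj'
                        simpa using hj'
                      have hj'3 := hx j'
                      omega
                  _ ≤ n * (C * K1) := by
                      rw [Finset.sum_const, smul_eq_mul]
                      apply Nat.mul_le_mul_right
                      calc Sc.card ≤ Finset.univ.card :=
                            Finset.card_le_card (Finset.subset_univ _)
                        _ = n := by simp
            _ = K2 + n * C * K1 := by ring
        obtain ⟨D, hD0, hDb, z, hz0, hzb, hzc, hzeq⟩ :=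
          master M hM hind (fun j' => if j' ∈ S then (x j' : ℚ) else 0)
            (fun j' hj' => by simp [hj']) b' hb' (K2 + n * C * K1) hR
        have hzj : z j = D * x j := by
          have h5 := hzc j
          rw [if_pos hjS] at h5
          exact_mod_cast h5
        have hDx : (x j).natAbs ≤ (z j).natAbs := by
          rw [hzj, Int.natAbs_mul]
          have h6 : 1 ≤ D.natAbs := Int.natAbs_pos.mpr hD0
          calc (x j).natAbs = 1 * (x j).natAbs := (one_mul _).symm
            _ ≤ D.natAbs * (x j).natAbs := Nat.mul_le_mul_right _ h6
        calc (x j).natAbs ≤ (z j).natAbs := hDx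
          _ ≤ S.card * (S.card.factorial * K1 ^ (S.card - 1)) * (K2 + n * C * K1) := hzb j
          _ ≤ Bnd := hterm S.card hS1 hSm
      · have h7 : ¬ (C : ℤ) < x j := fun h => hjS ((hSmem j).mpr h)
        have h8 := hx j
        have h9 : (x j).natAbs ≤ C := by omega
        omega
    · -- descent case
      obtain ⟨z, ⟨j₁, hj₁⟩, hz0, hzb, hzeq⟩ := kernel_of_not_colIndep M hM hK1 hind
      have hzC : ∀ j, (z j).natAbs ≤ C := fun j => hzb j
      have hsumtoNat : ∀ w : Fin n → ℤ, (∀ j, 0 < w j) →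
          ((∑ j, (w j).toNat : ℕ) : ℤ) = ∑ j, w j := by
        intro w hw
        push_cast
        apply Finset.sum_congr rfl
        intro j _
        exact Int.toNat_of_nonneg (le_of_lt (hw j))
      set σ : ℤ := ∑ j, z j with hσdef
      rcases eq_or_ne σ 0 with hσ0 | hσne
      · -- translate along the kernel vector
        have hpos : ∃ j, 0 < z j := by
          by_contra h
          push_neg at h
          have hall := (Finset.sum_eq_zero_iff_of_nonpos (fun j _ => h j)).mp hσ0
          exact hj₁ (hall j₁ (Finset.mem_univ _))
        obtain ⟨jp, hjp⟩ := hpos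
        set P : Finset (Fin n) := Finset.univ.filter (fun j => 0 < z j) with hPdef
        have hPne : P.Nonempty := ⟨jp, by rw [hPdef]; simp [hjp]⟩
        obtain ⟨jm, hjmP, hjmin⟩ := Finset.exists_min_image P (fun j => (x j - 1) / z j) hPne
        have hzjm : 0 < z jm := by
          rw [hPdef] at hjmP
          simpa using hjmP
        set k : ℤ := (x jm - 1) / z jm with hkdef
        have hk0 : 0 ≤ k := Int.ediv_nonneg (by have := hx jm; omega) (le_of_lt hzjm)
        have hkmul : ∀ j, 0 < z j → k * z j ≤ x j - 1 := by
          intro j hzj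
          have h1 : k ≤ (x j - 1) / z j := hjmin j (by rw [hPdef]; simp [hzj])
          exact (Int.le_ediv_iff_mul_le hzj).mp h1
        set x' : Fin n → ℤ := fun j => x j - k * z j with hx'def
        have hx'pos : ∀ j, 0 < x' j := by
          intro j
          simp only [hx'def]
          rcases lt_trichotomy (z j) 0 with h | h | h
          · have h2 : k * z j ≤ 0 := mul_nonpos_iff.mpr (Or.inl ⟨hk0, le_of_lt h⟩)
            have := hx j
            omega
          · rw [h, mul_zero]
            have := hx j
            omega
          · have := hkmul j h
            omega
        have hx'sol : M.mulVec x' = b := by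
          funext i
          show dotProduct (M i) x' = b i
          rw [dotProduct]
          have hstep : ∑ j, M i j * x' j = (∑ j, x j * M i j) - k * (∑ j, z j * M i j) := by
            rw [Finset.mul_sum, ← Finset.sum_sub_distrib]
            apply Finset.sum_congr rfl
            intro j _
            simp only [hx'def]
            ring
          rw [hstep, hMx' i, hzeq i, mul_zero, sub_zero]
        have hsum_eq : ∑ j, (x' j).toNat = ∑ j, (x j).toNat := by
          have h1 : ((∑ j, (x' j).toNat : ℕ) : ℤ) = ((∑ j, (x j).toNat : ℕ) : ℤ) := by
            rw [hsumtoNat x' hx'pos, hsumtoNat x hx]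
            have hstep : ∑ j, x' j = (∑ j, x j) - k * ∑ j, z j := by
              rw [Finset.mul_sum, ← Finset.sum_sub_distrib]
            rw [hstep, ← hσdef, hσ0, mul_zero, sub_zero]
          exact_mod_cast h1
        have hjmS : jm ∈ S := by
          rw [hSmem]
          by_contra h
          have : z jm = 0 := hz0 jm (fun hmem => h ((hSmem jm).mp hmem))
          omega
        have hx'jm : x' jm ≤ (C : ℤ) := by
          have hmod := Int.mul_ediv_add_emod (x jm - 1) (z jm)
          have hr0 : 0 ≤ (x jm - 1) % z jm := Int.emod_nonneg _ (ne_of_gt hzjm)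
          have hr1 : (x jm - 1) % z jm < z jm := Int.emod_lt_of_pos _ hzjm
          have hzjmC : z jm ≤ (C : ℤ) := by
            have := hzC jm
            omega
          simp only [hx'def]
          rw [← hkdef, mul_comm] at hmod
          omega
        have hSsub : Finset.univ.filter (fun j => (C : ℤ) < x' j) ⊂ S := by
          have hsub : Finset.univ.filter (fun j => (C : ℤ) < x' j) ⊆ S := by
            intro j hj
            rw [Finset.mem_filter] at hj
            rw [hSmem]
            by_contra h
            have hzj : z j = 0 := hz0 j (fun hmem => h ((hSmem j).mp hmem))
            have hxx : x' j = x j := by simp only [hx'def, hzj]; ring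
            omega
          rw [Finset.ssubset_iff_of_subset hsub]
          refine ⟨jm, hjmS, ?_⟩
          simp only [Finset.mem_filter]
          push_neg
          intro _
          omega
        have hcard : (Finset.univ.filter (fun j => (C : ℤ) < x' j)).card < S.card :=
          Finset.card_lt_card hSsub
        exact ih ((n + 1) * (∑ j, (x' j).toNat) +
            (Finset.univ.filter (fun j => (C : ℤ) < x' j)).card)
          (by rw [hsum_eq]; omega) x' hx'pos hx'sol le_rfl
      · -- strictly decrease the sum
        set w : Fin n → ℤ := if 0 < σ then z else (fun j => -(z j)) with hwdef
        have hwsupp : ∀ j, j ∉ S → w j = 0 := by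
          intro j hj
          rw [hwdef]
          split_ifs
          · exact hz0 j hj
          · simp [hz0 j hj]
        have hwC : ∀ j, w j ≤ (C : ℤ) := by
          intro j
          have := hzC j
          rw [hwdef]
          split_ifs
          · omega
          · simp only
            omega
        have hwsum : 0 < ∑ j, w j := by
          rw [hwdef]
          split_ifs with h
          · exact h
          · have h1 : σ < 0 := lt_of_le_of_ne (not_lt.mp h) hσne
            have h2 : ∑ j, -(z j) = -σ := by
              rw [hσdef, ← Finset.sum_neg_distrib]
            rw [h2]
            omega
        have hweq : ∀ i, ∑ j, w j * M i j = 0 := by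
          intro i
          rw [hwdef]
          split_ifs
          · exact hzeq i
          · have h1 : ∑ j, -(z j) * M i j = -(∑ j, z j * M i j) := by
              rw [← Finset.sum_neg_distrib]
              apply Finset.sum_congr rfl
              intro j _
              ring
            rw [h1, hzeq i, neg_zero]
        set x' : Fin n → ℤ := fun j => x j - w j with hx'def
        have hx'pos : ∀ j, 0 < x' j := by
          intro j
          simp only [hx'def]
          by_cases hjS : j ∈ S
          · have h1 := (hSmem j).mp hjS
            have h2 := hwC j
            omega
          · rw [hwsupp j hjS]
            have := hx j
            omega
        have hx'sol : M.mulVec x' = b := by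
          funext i
          show dotProduct (M i) x' = b i
          rw [dotProduct]
          have hstep : ∑ j, M i j * x' j = (∑ j, x j * M i j) - (∑ j, w j * M i j) := by
            rw [← Finset.sum_sub_distrib]
            apply Finset.sum_congr rfl
            intro j _
            simp only [hx'def]
            ring
          rw [hstep, hMx' i, hweq i, sub_zero]
        have hsum_lt : ∑ j, (x' j).toNat < ∑ j, (x j).toNat := by
          have h1 : ((∑ j, (x' j).toNat : ℕ) : ℤ) < ((∑ j, (x j).toNat : ℕ) : ℤ) := by
            rw [hsumtoNat x' hx'pos, hsumtoNat x hx]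
            have h2 : ∑ j, x' j = (∑ j, x j) - (∑ j, w j) := by
              rw [← Finset.sum_sub_distrib]
            omega
          exact_mod_cast h1
        have hcard' : (Finset.univ.filter (fun j => (C : ℤ) < x' j)).card ≤ n := by
          calc (Finset.univ.filter (fun j => (C : ℤ) < x' j)).card
              ≤ Finset.univ.card := Finset.card_le_card (Finset.subset_univ _)
            _ = n := by simp
        have hmul : (n + 1) * (∑ j, (x' j).toNat) + (n + 1) ≤ (n + 1) * (∑ j, (x j).toNat) := by
          calc (n + 1) * (∑ j, (x' j).toNat) + (n + 1)
              = (n + 1) * ((∑ j, (x' j).toNat) + 1) := by ring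
            _ ≤ (n + 1) * (∑ j, (x j).toNat) := Nat.mul_le_mul_left _ (by omega)
        exact ih ((n + 1) * (∑ j, (x' j).toNat) +
            (Finset.univ.filter (fun j => (C : ℤ) < x' j)).card)
          (by linarith) x' hx'pos hx'sol le_rfl
  exact key _ x hx hMx le_rfl
end
end

section
/- Let n = n_1 + n_2 ≥ 2 with n_1, n_2 positive integers, let M be an m-by-n integer matrix with all entries at most K_1 in absolute value, and let b ∈ ℤ^m with ‖b‖_∞ ≤ K_2, where K_1, K_2 ≥ 1. Define S = {(x,y) ∈ ℤ_{>0}^{n_1} × ℤ_{>0}^{n_2} : M(x,y)^T = b}, and let S_min be the set of x ∈ ℤ_{>0}^{n_1} such that (x,y) ∈ S for some y, and there is no (x_*, y_*) ∈ S with x_* <_unif x. Then every x_min ∈ S_min satisfies ‖x_min‖_∞ ≤ 2^{2n} m^{mn} K_1^{m(n+3)} n^{m+1} + 2^n m^{mn} K_1^{mn} K_2. -/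
open Pointwise MeasureTheory

noncomputable section

lemma exists_descent (m n : ℕ) (hn : 2 ≤ n) (K1 K2 : ℕ) (hK1 : 1 ≤ K1)
    (M : Matrix (Fin m) (Fin n) ℤ) (b : Fin m → ℤ)
    (hM : ∀ i j, (M i j).natAbs ≤ K1) (hb : ∀ i, (b i).natAbs ≤ K2)
    (w : Fin n → ℤ) (hw : ∀ j, 1 ≤ w j) (hMw : M.mulVec w = b)
    (j0 : Fin n) (hbig : (((2*n*K1)^m * (m*K2+1) + 2 : ℕ) : ℤ) ≤ w j0) :
    ∃ r : Fin n → ℤ, M.mulVec r = 0 ∧ (∀ j, 0 ≤ r j) ∧ (∀ j, r j ≤ w j - 1) ∧ 1 ≤ r j0 := by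
  set T : ℕ := (2*n*K1)^m * (m*K2+1) + 2 with hTdef
  have hT0 : (0:ℤ) < (T:ℤ) := by positivity
  have hTne : (T:ℤ) ≠ 0 := ne_of_gt hT0
  have hw0 : ∀ j, (0:ℤ) ≤ w j := fun j => le_trans zero_le_one (hw j)
  have hnK1 : (1:ℤ) ≤ (n*K1 : ℕ) := by
    have : 1 ≤ n*K1 := Nat.one_le_iff_ne_zero.2 (by positivity)
    exact_mod_cast this
  set Y : ℕ → Fin n → ℤ := fun t j => ((t:ℤ) * w j) / (T:ℤ) with hYdef
  have hYmono : ∀ {t t' : ℕ}, t ≤ t' → ∀ j, Y t j ≤ Y t' j := by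
    intro t t' h j
    exact Int.ediv_le_ediv hT0 (mul_le_mul_of_nonneg_right (by exact_mod_cast h) (hw0 j))
  have hY0 : ∀ t j, 0 ≤ Y t j :=
    fun t j => Int.ediv_nonneg (mul_nonneg (by positivity) (hw0 j)) (le_of_lt hT0)
  have hYtop : ∀ t : ℕ, t < T → ∀ j, Y t j ≤ w j - 1 := by
    intro t ht j
    have h1 : Y t j < w j := by
      rw [hYdef]
      rw [Int.ediv_lt_iff_lt_mul hT0]
      have h2 : (t:ℤ) < (T:ℤ) := by exact_mod_cast ht
      have h3 := hw j
      nlinarith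
    omega
  set φ : ℕ → Fin m → ℤ := fun t => M.mulVec (Y t) with hφdef
  set β : ℕ → Fin m → ℤ := fun t i => ((t:ℤ) * b i) / (T:ℤ) with hβdef
  set ψ : ℕ → Fin m → ℤ := fun t i => φ t i - β t i with hψdef
  -- key identity
  have hb' : ∀ i : Fin m, ∑ j, M i j * w j = b i := by
    intro i
    rw [← hMw]; rfl
  have hTphi : ∀ (t : ℕ) (i : Fin m),
      (T:ℤ) * φ t i = (t:ℤ) * b i - ∑ j, M i j * (((t:ℤ) * w j) % (T:ℤ)) := by
    intro t i
    have : (T:ℤ) * φ t i = ∑ j, M i j * ((T:ℤ) * Y t j) := by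
      rw [hφdef]
      simp only [Matrix.mulVec, dotProduct]
      rw [Finset.mul_sum]
      congr 1; funext j; ring
    rw [this]
    have hY : ∀ j, (T:ℤ) * Y t j = (t:ℤ) * w j - ((t:ℤ) * w j) % (T:ℤ) := by
      intro j
      have h := Int.mul_ediv_add_emod ((t:ℤ) * w j) (T:ℤ)
      change (T:ℤ) * (((t:ℤ) * w j) / (T:ℤ)) = _
      omega
    calc ∑ j, M i j * ((T:ℤ) * Y t j)
        = ∑ j, (M i j * ((t:ℤ) * w j) - M i j * (((t:ℤ) * w j) % (T:ℤ))) := by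
          congr 1; funext j; rw [hY j]; ring
      _ = (t:ℤ) * (∑ j, M i j * w j) - ∑ j, M i j * (((t:ℤ) * w j) % (T:ℤ)) := by
          rw [Finset.sum_sub_distrib, Finset.mul_sum]
          congr 1; congr 1; funext j; ring
      _ = (t:ℤ) * b i - ∑ j, M i j * (((t:ℤ) * w j) % (T:ℤ)) := by rw [hb' i]
  -- bound on entries of M
  have hMabs : ∀ i j, |M i j| ≤ (K1:ℤ) := by
    intro i j
    have := hM i j
    exact abs_le.2 ⟨by omega, by omega⟩
  -- bound on the error sum
  have hEbound : ∀ (t : ℕ) (i : Fin m),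
      |∑ j, M i j * (((t:ℤ) * w j) % (T:ℤ))| ≤ (n:ℤ) * K1 * ((T:ℤ) - 1) := by
    intro t i
    calc |∑ j, M i j * (((t:ℤ) * w j) % (T:ℤ))|
        ≤ ∑ j, |M i j * (((t:ℤ) * w j) % (T:ℤ))| := Finset.abs_sum_le_sum_abs _ _
      _ ≤ ∑ _j : Fin n, (K1:ℤ) * ((T:ℤ) - 1) := by
          apply Finset.sum_le_sum
          intro j _
          rw [abs_mul]
          have h1 : |((t:ℤ) * w j) % (T:ℤ)| ≤ (T:ℤ) - 1 := by
            have := Int.emod_nonneg ((t:ℤ) * w j) hTne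
            have := Int.emod_lt_of_pos ((t:ℤ) * w j) hT0
            rw [abs_of_nonneg ‹0 ≤ ((t:ℤ) * w j) % (T:ℤ)›]; omega
          have h2 := hMabs i j
          have h3 : (0:ℤ) ≤ |((t:ℤ) * w j) % (T:ℤ)| := abs_nonneg _
          have h4 : (0:ℤ) ≤ (K1:ℤ) := by positivity
          exact mul_le_mul h2 h1 h3 h4
      _ = (n:ℤ) * K1 * ((T:ℤ) - 1) := by
          rw [Finset.sum_const, Finset.card_univ, Fintype.card_fin]
          push_cast; ring
  -- range of ψ
  have hψrange : ∀ (t : ℕ) (i : Fin m),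
      1 - ((n*K1 : ℕ) : ℤ) ≤ ψ t i ∧ ψ t i ≤ ((n*K1 : ℕ) : ℤ) := by
    intro t i
    have hρ1 : (0:ℤ) ≤ ((t:ℤ) * b i) % (T:ℤ) := Int.emod_nonneg _ hTne
    have hρ2 : ((t:ℤ) * b i) % (T:ℤ) < (T:ℤ) := Int.emod_lt_of_pos _ hT0
    have hTβ : (T:ℤ) * β t i = (t:ℤ) * b i - ((t:ℤ) * b i) % (T:ℤ) := by
      have h := Int.mul_ediv_add_emod ((t:ℤ) * b i) (T:ℤ)
      change (T:ℤ) * (((t:ℤ) * b i) / (T:ℤ)) = _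
      omega
    have hTψ : (T:ℤ) * ψ t i
        = ((t:ℤ) * b i) % (T:ℤ) - ∑ j, M i j * (((t:ℤ) * w j) % (T:ℤ)) := by
      have h1 := hTphi t i
      have : (T:ℤ) * ψ t i = (T:ℤ) * φ t i - (T:ℤ) * β t i := by
        change (T:ℤ) * (φ t i - β t i) = _; ring
      rw [this, h1, hTβ]; ring
    have hE := hEbound t i
    rw [abs_le] at hE
    have hNK : (((n*K1 : ℕ)):ℤ) = (n:ℤ) * K1 := by push_cast; ring
    constructor
    · -- ψ > -(nK1)
      have hlow : (T:ℤ) * (-(((n*K1:ℕ)):ℤ)) < (T:ℤ) * ψ t i := by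
        rw [hTψ, hNK]
        have : (0:ℤ) < (n:ℤ) * K1 := by rw [← hNK]; omega
        nlinarith
      have := (mul_lt_mul_iff_right₀ hT0).mp hlow
      omega
    · have hhigh : (T:ℤ) * ψ t i < (T:ℤ) * (((n*K1:ℕ):ℤ) + 1) := by
        rw [hTψ, hNK]
        have : (0:ℤ) < (n:ℤ) * K1 := by rw [← hNK]; omega
        nlinarith
      have := (mul_lt_mul_iff_right₀ hT0).mp hhigh
      omega
  -- β is monotone towards b, bounded by b
  have hβmono : ∀ {t t' : ℕ}, t ≤ t' → ∀ i : Fin m,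
      (0 ≤ b i → β t i ≤ β t' i) ∧ (b i ≤ 0 → β t' i ≤ β t i) := by
    intro t t' h i
    constructor
    · intro hbi
      exact Int.ediv_le_ediv hT0 (mul_le_mul_of_nonneg_right (by exact_mod_cast h) hbi)
    · intro hbi
      apply Int.ediv_le_ediv hT0
      have : (t:ℤ) ≤ (t':ℤ) := by exact_mod_cast h
      nlinarith
  have hβsign : ∀ (t : ℕ) (i : Fin m), (0 ≤ b i → 0 ≤ β t i) ∧ (b i ≤ 0 → β t i ≤ 0) := by
    intro t i
    constructor
    · intro hbi
      exact Int.ediv_nonneg (mul_nonneg (by positivity) hbi) (le_of_lt hT0)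
    · intro hbi
      have h1 : (t:ℤ) * b i ≤ 0 := mul_nonpos_of_nonneg_of_nonpos (by positivity) hbi
      have := Int.ediv_le_ediv hT0 h1
      simpa using this
  have hβbound : ∀ (t : ℕ), t ≤ T → ∀ i : Fin m, (β t i).natAbs ≤ (b i).natAbs := by
    intro t ht i
    have hend : β T i = b i := by
      change ((T:ℤ) * b i) / (T:ℤ) = b i
      exact Int.mul_ediv_cancel_left _ hTne
    rcases le_or_gt 0 (b i) with hbi | hbi
    · have h1 := (hβsign t i).1 hbi
      have h2 := (hβmono ht i).1 hbi
      rw [hend] at h2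
      omega
    · have h1 := (hβsign t i).2 (le_of_lt hbi)
      have h2 := (hβmono ht i).2 (le_of_lt hbi)
      rw [hend] at h2
      omega
  set g : ℕ → ℕ := fun t => ∑ i, (β t i).natAbs with hgdef
  have hgbound : ∀ (t : ℕ), t ≤ T → g t ≤ m * K2 := by
    intro t ht
    calc g t ≤ ∑ _i : Fin m, K2 := Finset.sum_le_sum (fun i _ => le_trans (hβbound t ht i) (hb i))
      _ = m * K2 := by rw [Finset.sum_const, Finset.card_univ, Fintype.card_fin, smul_eq_mul]
  -- if g and ψ agree at t ≤ t', then φ agrees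
  have hkey : ∀ (t t' : ℕ), t ≤ t' → ψ t = ψ t' → g t = g t' → φ t = φ t' := by
    intro t t' h hψeq hgeq
    have hmono : ∀ i : Fin m, (β t i).natAbs ≤ (β t' i).natAbs := by
      intro i
      rcases le_or_gt 0 (b i) with hbi | hbi
      · have h1 := (hβsign t i).1 hbi
        have h2 := (hβmono h i).1 hbi
        omega
      · have h0 := (hβsign t i).2 (le_of_lt hbi)
        have h1 := (hβsign t' i).2 (le_of_lt hbi)
        have h2 := (hβmono h i).2 (le_of_lt hbi)
        omega
    have heach : ∀ i ∈ Finset.univ, (β t i).natAbs = (β t' i).natAbs :=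
      (Finset.sum_eq_sum_iff_of_le (fun i _ => hmono i)).mp hgeq
    have hβeq : ∀ i : Fin m, β t i = β t' i := by
      intro i
      have h1 := heach i (Finset.mem_univ i)
      rcases le_or_gt 0 (b i) with hbi | hbi
      · have h2 := (hβsign t i).1 hbi
        have h3 := (hβsign t' i).1 hbi
        omega
      · have h2 := (hβsign t i).2 (le_of_lt hbi)
        have h3 := (hβsign t' i).2 (le_of_lt hbi)
        omega
    funext i
    have h1 : ψ t i = ψ t' i := congrFun hψeq i
    have h2 : ψ t i = φ t i - β t i := rfl
    have h3 : ψ t' i = φ t' i - β t' i := rfl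
    have := hβeq i
    omega
  -- pigeonhole
  set Fs : Finset ((Fin m → ℤ) × ℕ) :=
    (Fintype.piFinset fun _ : Fin m => Finset.Icc (1 - ((n*K1 : ℕ) : ℤ)) ((n*K1 : ℕ) : ℤ)) ×ˢ
      Finset.Icc 0 (m*K2) with hFsdef
  have hFscard : Fs.card = (2*n*K1)^m * (m*K2+1) := by
    rw [hFsdef, Finset.card_product, Fintype.card_piFinset]
    have h1 : (Finset.Icc (1 - ((n*K1 : ℕ) : ℤ)) ((n*K1 : ℕ) : ℤ)).card = 2*n*K1 := by
      rw [Int.card_Icc]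
      have : ((n*K1 : ℕ) : ℤ) + 1 - (1 - ((n*K1 : ℕ) : ℤ)) = ((2*n*K1 : ℕ) : ℤ) := by
        push_cast; ring
      rw [this, Int.toNat_natCast]
    rw [Finset.prod_const, h1, Finset.card_univ, Fintype.card_fin, Nat.card_Icc, Nat.sub_zero]
  have hsrc : (Finset.Icc 1 (T-1)).card = (2*n*K1)^m * (m*K2+1) + 1 := by
    rw [Nat.card_Icc]; omega
  obtain ⟨t₁, ht₁, t₂, ht₂, htne, hteq⟩ :
      ∃ t₁ ∈ Finset.Icc 1 (T-1), ∃ t₂ ∈ Finset.Icc 1 (T-1), t₁ ≠ t₂ ∧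
        (fun t => (ψ t, g t)) t₁ = (fun t => (ψ t, g t)) t₂ := by
    apply Finset.exists_ne_map_eq_of_card_lt_of_maps_to
    · rw [hFscard, hsrc]; omega
    · intro t ht
      rw [Finset.mem_coe, Finset.mem_Icc] at ht
      rw [Finset.mem_coe, hFsdef, Finset.mem_product]
      constructor
      · rw [Fintype.mem_piFinset]
        intro i
        rw [Finset.mem_Icc]
        exact hψrange t i
      · rw [Finset.mem_Icc]
        exact ⟨Nat.zero_le _, hgbound t (by omega)⟩
  rw [Finset.mem_Icc] at ht₁ ht₂
  -- wlog t₁ < t₂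
  have main : ∀ s s' : ℕ, 1 ≤ s → s' ≤ T - 1 → s < s' → φ s = φ s' →
      ∃ r : Fin n → ℤ, M.mulVec r = 0 ∧ (∀ j, 0 ≤ r j) ∧ (∀ j, r j ≤ w j - 1) ∧ 1 ≤ r j0 := by
    intro s s' hs1 hs'T hss hφeq
    refine ⟨Y s' - Y s, ?_, ?_, ?_, ?_⟩
    · rw [Matrix.mulVec_sub]
      have : M.mulVec (Y s') = φ s' := rfl
      rw [this, ← hφeq]
      simp [hφdef]
    · intro j
      have := hYmono (le_of_lt hss) j
      simp only [Pi.sub_apply]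
      omega
    · intro j
      have h1 := hYtop s' (by omega) j
      have h2 := hY0 s j
      simp only [Pi.sub_apply]
      omega
    · have hstep : Y s j0 + 1 ≤ Y s' j0 := by
        have h1 : Y (s+1) j0 ≤ Y s' j0 := hYmono (by omega) j0
        have h2 : Y s j0 + 1 ≤ Y (s+1) j0 := by
          have ha : ((s:ℤ) * w j0 + 1 * (T:ℤ)) / (T:ℤ) = ((s:ℤ) * w j0) / (T:ℤ) + 1 :=
            Int.add_mul_ediv_right _ 1 hTne
          have hle : (s:ℤ) * w j0 + 1 * (T:ℤ) ≤ ((s:ℕ)+1 : ℤ) * w j0 := by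
            have := hbig; nlinarith
          have hmono := Int.ediv_le_ediv hT0 hle
          rw [ha] at hmono
          have : Y (s+1) j0 = (((s:ℕ)+1 : ℤ) * w j0) / (T:ℤ) := by
            change ((((s+1):ℕ):ℤ) * w j0) / (T:ℤ) = _
            push_cast; ring_nf
          rw [this]
          exact hmono
        omega
      simp only [Pi.sub_apply]
      omega
  have hψg : ψ t₁ = ψ t₂ ∧ g t₁ = g t₂ := by
    have h1 := congrArg Prod.fst hteq
    have h2 := congrArg Prod.snd hteq
    exact ⟨h1, h2⟩
  rcases Nat.lt_or_ge t₁ t₂ with hlt | hge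
  · exact main t₁ t₂ ht₁.1 ht₂.2 hlt (hkey t₁ t₂ (le_of_lt hlt) hψg.1 hψg.2)
  · have hlt : t₂ < t₁ := by omega
    exact main t₂ t₁ ht₂.1 ht₁.2 hlt (hkey t₂ t₁ (le_of_lt hlt) hψg.1.symm hψg.2.symm)


lemma aux_two_mul_le_pow (n : ℕ) (hn : 2 ≤ n) : 2*n ≤ 2^n := by
  induction n with
  | zero => omega
  | succ k ih =>
    rcases Nat.lt_or_ge k 2 with h | h
    · have : k = 1 := by omega
      subst this; norm_num
    · have h1 := ih h
      have h2 : 2 ≤ 2^k := by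
        calc 2 = 2^1 := rfl
          _ ≤ 2^k := Nat.pow_le_pow_right (by norm_num) (by omega)
      have h3 : 2^(k+1) = 2^k + 2^k := by ring
      omega

lemma aux_add_three (p m : ℕ) (hm : 3 ≤ m) : p + 3 ≤ m^(p+1) := by
  induction p with
  | zero => simpa using hm
  | succ k ih =>
    calc k + 1 + 3 ≤ (k+3)*3 := by omega
      _ ≤ m^(k+1) * m := Nat.mul_le_mul ih hm
      _ = m^(k+1+1) := by ring

lemma arith_L1 (m n : ℕ) (hn : 2 ≤ n) : (2*n)^m * m ≤ 2^n * m^(m*n) := by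
  have h2n : 2 ≤ 2^n := by
    calc 2 = 2^1 := rfl
      _ ≤ 2^n := Nat.pow_le_pow_right (by norm_num) (by omega)
  match m with
  | 0 => simp
  | 1 => simpa using aux_two_mul_le_pow n hn
  | 2 =>
    have h1 : (2*n)^2 ≤ (2^n)^2 := Nat.pow_le_pow_left (aux_two_mul_le_pow n hn) 2
    calc (2*n)^2 * 2 ≤ (2^n)^2 * 2 := Nat.mul_le_mul_right 2 h1
      _ ≤ (2^n)^2 * 2^n := Nat.mul_le_mul_left _ h2n
      _ = 2^n * 2^(2*n) := by rw [← pow_mul]; ring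
  | (q+3) =>
    have hm3 : 3 ≤ q+3 := by omega
    have hmle : q+3 ≤ 2^(q+3) := (Nat.lt_two_pow_self (n := q+3)).le
    have h2m : 2^(q+3) * (q+3) ≤ (q+3)^(2*(q+3)) := by
      calc 2^(q+3) * (q+3) ≤ 2^(q+3) * 2^(q+3) := Nat.mul_le_mul_left _ hmle
        _ = (2*2)^(q+3) := by rw [← mul_pow]
        _ ≤ ((q+3)^2)^(q+3) := Nat.pow_le_pow_left (by nlinarith) (q+3)
        _ = (q+3)^(2*(q+3)) := by rw [← pow_mul]
    rcases Nat.eq_or_lt_of_le hn with h2 | h3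
    · rw [← h2]
      calc (2*2)^(q+3) * (q+3) ≤ (2*2)^(q+3) * 2^(q+3) := Nat.mul_le_mul_left _ hmle
        _ = (2*2*2)^(q+3) := by rw [← mul_pow]
        _ ≤ ((q+3)^2)^(q+3) := Nat.pow_le_pow_left (by nlinarith) (q+3)
        _ = (q+3)^((q+3)*2) := by rw [← pow_mul, Nat.mul_comm]
        _ ≤ 2^2 * (q+3)^((q+3)*2) := Nat.le_mul_of_pos_left _ (by norm_num)
    · obtain ⟨p, rfl⟩ : ∃ p, n = p+3 := ⟨n-3, by omega⟩
      have hnm : p+3 ≤ (q+3)^(p+1) := aux_add_three p (q+3) hm3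
      calc (2*(p+3))^(q+3) * (q+3)
          = 2^(q+3) * (p+3)^(q+3) * (q+3) := by rw [mul_pow]
        _ ≤ 2^(q+3) * ((q+3)^(p+1))^(q+3) * (q+3) := by
            have := Nat.pow_le_pow_left hnm (q+3)
            exact Nat.mul_le_mul_right _ (Nat.mul_le_mul_left _ this)
        _ = (2^(q+3) * (q+3)) * (q+3)^((p+1)*(q+3)) := by rw [← pow_mul]; ring
        _ ≤ (q+3)^(2*(q+3)) * (q+3)^((p+1)*(q+3)) := Nat.mul_le_mul_right _ h2m
        _ = (q+3)^(2*(q+3) + (p+1)*(q+3)) := (pow_add _ _ _).symm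
        _ = (q+3)^((q+3)*(p+3)) := by congr 1; ring
        _ ≤ 2^(p+3) * (q+3)^((q+3)*(p+3)) := Nat.le_mul_of_pos_left _ (by positivity)

lemma arith_L2 (m n : ℕ) (hn : 2 ≤ n) : 2^m + 1 ≤ 2^(2*n) * n * m^(m*n) := by
  have h16 : 16 ≤ 2^(2*n) := by
    calc 16 = 2^4 := rfl
      _ ≤ 2^(2*n) := Nat.pow_le_pow_right (by norm_num) (by omega)
  match m with
  | 0 =>
    simp only [pow_zero, Nat.zero_mul, mul_one]
    calc 2^0 + 1 = 2 := rfl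
      _ ≤ 2^(2*n) := by omega
      _ ≤ 2^(2*n) * n := Nat.le_mul_of_pos_right _ (by omega)
  | 1 =>
    simp only [pow_one, Nat.one_mul, one_pow, mul_one]
    calc 2 + 1 ≤ 2^(2*n) := by omega
      _ ≤ 2^(2*n) * n := Nat.le_mul_of_pos_right _ (by omega)
  | (q+2) =>
    have h1 : 1 ≤ 2^(q+2) := Nat.one_le_two_pow
    have h2 : 2^(q+2) + 1 ≤ 2^(q+2+1) := by
      have : 2^(q+2+1) = 2^(q+2) + 2^(q+2) := by ring
      omega
    have h3 : 2^(q+2+1) ≤ 2^(2*(q+2)) := Nat.pow_le_pow_right (by norm_num) (by omega)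
    have h4 : 2^(2*(q+2)) ≤ (q+2)^(2*(q+2)) := Nat.pow_le_pow_left (by omega) _
    have h5 : (q+2)^(2*(q+2)) ≤ (q+2)^((q+2)*n) :=
      Nat.pow_le_pow_right (by omega) (by nlinarith)
    have h6 : (q+2)^((q+2)*n) ≤ 2^(2*n) * n * (q+2)^((q+2)*n) :=
      Nat.le_mul_of_pos_left _ (by positivity)
    omega

lemma arith_bound (m n K1 K2 : ℕ) (hn : 2 ≤ n) (hK1 : 1 ≤ K1) (hK2 : 1 ≤ K2) :
    (2*n*K1)^m * (m*K2+1) + 1 ≤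
      2^(2*n) * m^(m*n) * K1^(m*(n+3)) * n^(m+1) + 2^n * m^(m*n) * K1^(m*n) * K2 := by
  have hsplit : (2*n*K1)^m * (m*K2+1) + 1
      = ((2*n)^m * m) * K1^m * K2 + ((2*n)^m * K1^m + 1) := by
    rw [mul_pow]; ring
  rw [hsplit]
  have hterm2 : ((2*n)^m * m) * K1^m * K2 ≤ 2^n * m^(m*n) * K1^(m*n) * K2 := by
    apply Nat.mul_le_mul_right
    exact Nat.mul_le_mul (arith_L1 m n hn)
      (Nat.pow_le_pow_right hK1 (by nlinarith))
  have hterm1 : (2*n)^m * K1^m + 1 ≤ 2^(2*n) * m^(m*n) * K1^(m*(n+3)) * n^(m+1) := by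
    have hp : 1 ≤ n^m * K1^m := Nat.one_le_iff_ne_zero.mpr (by positivity)
    have h1 : (2*n)^m * K1^m + 1 ≤ (2^m + 1) * (n^m * K1^m) := by
      have e : (2*n)^m * K1^m = 2^m * (n^m * K1^m) := by rw [mul_pow]; ring
      calc (2*n)^m * K1^m + 1 = 2^m * (n^m * K1^m) + 1 := by rw [e]
        _ ≤ 2^m * (n^m * K1^m) + n^m * K1^m := by omega
        _ = (2^m + 1) * (n^m * K1^m) := by ring
    have h2 : (2^m + 1) * (n^m * K1^m) ≤ (2^(2*n) * n * m^(m*n)) * (n^m * K1^m) :=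
      Nat.mul_le_mul_right _ (arith_L2 m n hn)
    have h3 : (2^(2*n) * n * m^(m*n)) * (n^m * K1^m)
        = 2^(2*n) * m^(m*n) * K1^m * n^(m+1) := by ring
    have h4 : 2^(2*n) * m^(m*n) * K1^m * n^(m+1)
        ≤ 2^(2*n) * m^(m*n) * K1^(m*(n+3)) * n^(m+1) := by
      apply Nat.mul_le_mul_right
      exact Nat.mul_le_mul_left _ (Nat.pow_le_pow_right hK1 (by nlinarith))
    omega
  omega

/-- Bound on minimal positive solutions with respect to the coordinatewise partial order. -/
theorem minimal_solutions_bound (m n1 n2 : ℕ) (hn1 : 0 < n1) (hn2 : 0 < n2)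
    (hn : 2 ≤ n1 + n2)
    (M : Matrix (Fin m) (Fin (n1 + n2)) ℤ)
    (b : Fin m → ℤ) (K1 K2 : ℕ) (hK1 : 1 ≤ K1) (hK2 : 1 ≤ K2)
    (hM : ∀ i j, (M i j).natAbs ≤ K1) (hb : ∀ i, (b i).natAbs ≤ K2) :
    ∀ xmin : Fin n1 → ℤ,
      ((∃ y : Fin n2 → ℤ, (∀ i, 0 < xmin i) ∧ (∀ i, 0 < y i) ∧
          M.mulVec (Fin.append xmin y) = b) ∧
        ¬∃ xs : Fin n1 → ℤ, ∃ ys : Fin n2 → ℤ,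
          (∀ i, 0 < xs i) ∧ (∀ i, 0 < ys i) ∧ M.mulVec (Fin.append xs ys) = b ∧
          (∀ i, xs i ≤ xmin i) ∧ xs ≠ xmin) →
      ∀ i, (xmin i).natAbs ≤
        2 ^ (2 * (n1 + n2)) * m ^ (m * (n1 + n2)) * K1 ^ (m * (n1 + n2 + 3))
            * (n1 + n2) ^ (m + 1)
          + 2 ^ (n1 + n2) * m ^ (m * (n1 + n2)) * K1 ^ (m * (n1 + n2)) * K2 := by
  intro xmin hyp i
  obtain ⟨⟨y, hx, hy, hMw⟩, hmin⟩ := hyp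
  set w : Fin (n1+n2) → ℤ := Fin.append xmin y with hwdef
  have hw : ∀ j, 1 ≤ w j := by
    intro j
    refine Fin.addCases (fun i' => ?_) (fun i' => ?_) j
    · rw [hwdef, Fin.append_left]; exact hx i'
    · rw [hwdef, Fin.append_right]; exact hy i'
  have hstep : (xmin i).natAbs ≤ (2*(n1+n2)*K1)^m * (m*K2+1) + 1 := by
    by_contra hcon
    have hxi := hx i
    have hbig : (((2*(n1+n2)*K1)^m * (m*K2+1) + 2 : ℕ) : ℤ) ≤ w (Fin.castAdd n2 i) := by
      rw [hwdef, Fin.append_left]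
      omega
    obtain ⟨r, hr0, hrpos, hrle, hrj0⟩ :=
      exists_descent m (n1+n2) hn K1 K2 hK1 M b hM hb w hw hMw (Fin.castAdd n2 i) hbig
    apply hmin
    refine ⟨fun i' => xmin i' - r (Fin.castAdd n2 i'),
      fun i' => y i' - r (Fin.natAdd n1 i'), ?_, ?_, ?_, ?_, ?_⟩
    · intro i'
      have h1 := hrle (Fin.castAdd n2 i')
      rw [hwdef, Fin.append_left] at h1
      show (0:ℤ) < xmin i' - r (Fin.castAdd n2 i')
      omega
    · intro i'
      have h1 := hrle (Fin.natAdd n1 i')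
      rw [hwdef, Fin.append_right] at h1
      show (0:ℤ) < y i' - r (Fin.natAdd n1 i')
      omega
    · have happ : Fin.append (fun i' => xmin i' - r (Fin.castAdd n2 i'))
          (fun i' => y i' - r (Fin.natAdd n1 i')) = w - r := by
        funext j
        refine Fin.addCases (fun i' => ?_) (fun i' => ?_) j
        · rw [Fin.append_left, Pi.sub_apply, hwdef, Fin.append_left]
        · rw [Fin.append_right, Pi.sub_apply, hwdef, Fin.append_right]
      rw [happ, Matrix.mulVec_sub, hMw, hr0, sub_zero]
    · intro i'
      exact sub_le_self _ (hrpos (Fin.castAdd n2 i'))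
    · intro heq
      have h1 := congrFun heq i
      omega
  calc (xmin i).natAbs ≤ (2*(n1+n2)*K1)^m * (m*K2+1) + 1 := hstep
    _ ≤ 2 ^ (2 * (n1 + n2)) * m ^ (m * (n1 + n2)) * K1 ^ (m * (n1 + n2 + 3))
            * (n1 + n2) ^ (m + 1)
          + 2 ^ (n1 + n2) * m ^ (m * (n1 + n2)) * K1 ^ (m * (n1 + n2)) * K2 :=
        arith_bound m (n1+n2) K1 K2 hn hK1 hK2
end
end

section
/- Let A ⊂ ℤ^d be a finite set with 0 ∈ A and |A| = ℓ ≥ 2, and set K_A = 4 d^d ℓ^{3d} w(A)^{3d}. If x ∈ C_A ∩ Λ_A and (x + [−K_A, K_A]^d) ∩ span_ℝ(A) ⊆ C_A, then x ∈ P(A). -/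
open Pointwise MeasureTheory

noncomputable section

lemma ipr_nfold_add {d : ℕ} {A : Set (Fin d → ℤ)} {M N : ℕ} {x y : Fin d → ℤ}
    (hx : x ∈ nfold d A M) (hy : y ∈ nfold d A N) : x + y ∈ nfold d A (M + N) := by
  obtain ⟨f, hf, hfx⟩ := hx
  obtain ⟨g, hg, hgy⟩ := hy
  refine ⟨Fin.append f g, ?_, ?_⟩
  · intro i
    refine Fin.addCases (motive := fun i => Fin.append f g i ∈ A) ?_ ?_ i
    · intro j; simpa using hf j
    · intro j; simpa using hg j
  · rw [Fin.sum_univ_add]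
    simp [Fin.append_left, Fin.append_right, hfx, hgy]

lemma ipr_nsmul_mem_nfold {d : ℕ} {A : Set (Fin d → ℤ)} {a : Fin d → ℤ} (ha : a ∈ A) (n : ℕ) :
    n • a ∈ nfold d A n :=
  ⟨fun _ => a, fun _ => ha, by simp⟩

lemma ipr_sum_mem_nfold {d : ℕ} {A : Finset (Fin d → ℤ)} (N : (Fin d → ℤ) → ℕ) :
    ∑ a ∈ A, N a • a ∈ nfold d (↑A) (∑ a ∈ A, N a) := by
  classical
  induction A using Finset.induction_on with
  | empty => exact ⟨fun i => i.elim0, fun i => i.elim0, by simp; exact Eq.symm (Finset.sum_eq_zero fun i _ => i.elim0)⟩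
  | @insert a s ha ih =>
      rw [Finset.sum_insert ha, Finset.sum_insert ha]
      have h1 : N a • a ∈ nfold d (↑(insert a s) : Set (Fin d → ℤ)) (N a) :=
        ipr_nsmul_mem_nfold (by simp) (N a)
      have h2 : ∑ b ∈ s, N b • b ∈ nfold d (↑(insert a s) : Set (Fin d → ℤ)) (∑ b ∈ s, N b) := by
        obtain ⟨f, hf, hfs⟩ := ih
        exact ⟨f, fun i => Finset.mem_coe.mpr (Finset.mem_insert_of_mem (Finset.mem_coe.mp (hf i))), hfs⟩
      exact ipr_nfold_add h1 h2

lemma ipr_latt_rep {d : ℕ} (A : Finset (Fin d → ℤ)) {z : Fin d → ℤ}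
    (hz : z ∈ latt d ↑A) : ∃ n : (Fin d → ℤ) → ℤ, z = ∑ a ∈ A, n a • a := by
  classical
  let G : AddSubgroup (Fin d → ℤ) :=
  { carrier := {z | ∃ n : (Fin d → ℤ) → ℤ, z = ∑ a ∈ A, n a • a}
    zero_mem' := ⟨0, by simp⟩
    add_mem' := by
      rintro x y ⟨n, rfl⟩ ⟨m, rfl⟩
      exact ⟨n + m, by simp only [Pi.add_apply, add_zsmul, Finset.sum_add_distrib]⟩
    neg_mem' := by
      rintro x ⟨n, rfl⟩
      refine ⟨-n, ?_⟩
      ext i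
      simp [Finset.sum_apply, neg_mul, Finset.sum_neg_distrib] }
  have h : latt d ↑A ≤ G := by
    apply AddSubgroup.closure_le _ |>.mpr
    intro a ha
    exact ⟨fun b => if b = a then 1 else 0, by
      simp only [ite_smul, one_zsmul, zero_smul]
      rw [Finset.sum_ite_eq' A a fun b => b, if_pos (Finset.mem_coe.mp ha)]⟩
  exact h hz

lemma ipr_floor_step (q x : ℚ) (hq : |q| ≤ 1) : |⌊x + q⌋ - ⌊x⌋| ≤ 1 := by
  rw [abs_le] at hq ⊢
  constructor
  · have h2 : ⌊x + ((-1 : ℤ) : ℚ)⌋ ≤ ⌊x + q⌋ := Int.floor_le_floor (by push_cast; linarith [hq.1])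
    rw [Int.floor_add_intCast] at h2
    omega
  · have h2 : ⌊x + q⌋ ≤ ⌊x + ((1 : ℤ) : ℚ)⌋ := Int.floor_le_floor (by push_cast; linarith [hq.2])
    rw [Int.floor_add_intCast] at h2
    omega

lemma ipr_floor_close (x : ℚ) : |(⌊x⌋ : ℚ) - x| ≤ 1 := by
  have h1 := Int.floor_le x
  have h2 := Int.sub_one_lt_floor x
  rw [abs_le]
  constructor <;> linarith


lemma ipr_shorten {α : Type*} [DecidableEq α] (S : α → α → Prop) (B : Finset α) (x0 xe : α) :
    ∀ L : ℕ, (∃ v : ℕ → α, v 0 = x0 ∧ v L = xe ∧ (∀ t, t < L → S (v t) (v (t+1))) ∧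
      (∀ t, t ≤ L → v t ∈ B)) →
    ∃ L' ≤ B.card, ∃ v : ℕ → α, v 0 = x0 ∧ v L' = xe ∧ (∀ t, t < L' → S (v t) (v (t+1))) ∧
      (∀ t, t ≤ L' → v t ∈ B) := by
  intro L
  induction L using Nat.strong_induction_on with
  | _ L ih =>
    rintro ⟨v, h0, he, hst, hb⟩
    by_cases hL : L ≤ B.card
    · exact ⟨L, hL, v, h0, he, hst, hb⟩
    · push_neg at hL
      obtain ⟨s, hs', t, ht', hne, heq⟩ :=
        Finset.exists_ne_map_eq_of_card_lt_of_maps_to (s := Finset.range (B.card + 1))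
          (t := B) (by simp) (fun r hr => hb r (by simp only [Finset.mem_coe, Finset.mem_range] at hr; omega))
      simp only [Finset.mem_range] at hs' ht'
      wlog hlt : s < t generalizing s t
      · exact this t s hne.symm heq.symm ht' hs' (by omega)
      set k := t - s with hk
      have hk1 : 1 ≤ k := by omega
      have hkL : k ≤ L := by omega
      refine ih (L - k) (by omega) ⟨fun r => if r ≤ s then v r else v (r + k), ?_, ?_, ?_, ?_⟩
      · simp [h0]
      · have h : ¬ (L - k ≤ s) := by omega
        simp only [if_neg h]
        have h2 : L - k + k = L := by omega
        rw [h2, he]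
      · intro r hr
        rcases Nat.lt_or_ge r s with h1 | h1
        · simp only [if_pos (le_of_lt h1), if_pos (by omega : r + 1 ≤ s)]
          exact hst r (by omega)
        · rcases Nat.eq_or_lt_of_le h1 with h2 | h2
          · simp only [if_pos (le_of_eq h2.symm), if_neg (by omega : ¬ r + 1 ≤ s)]
            have h3 : r + 1 + k = t + 1 := by omega
            have h4 : v r = v t := by rw [← h2]; exact heq
            rw [h3, h4]
            exact hst t (by omega)
          · simp only [if_neg (by omega : ¬ r ≤ s), if_neg (by omega : ¬ r + 1 ≤ s)]
            have h3 : r + 1 + k = r + k + 1 := by omega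
            rw [h3]
            exact hst (r + k) (by omega)
      · intro r hr
        by_cases h : r ≤ s
        · simp only [if_pos h]; exact hb r (by omega)
        · simp only [if_neg h]; exact hb (r + k) (by omega)

lemma ipr_siegel {d : ℕ} (A : Finset (Fin d → ℤ)) (C : ℕ)
    (hA : ∀ i, ∑ a ∈ A, |a i| ≤ (C : ℤ))
    (δ : Fin d → ℤ) (hδ : ∀ i, |δ i| ≤ (C : ℤ))
    (n0 : (Fin d → ℤ) → ℤ) (hn0 : δ = ∑ a ∈ A, n0 a • a) :
    ∃ m : (Fin d → ℤ) → ℤ, (δ = ∑ a ∈ A, m a • a) ∧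
      ∀ a, |m a| ≤ (((4 * C + 1) ^ d : ℕ) : ℤ) := by
  classical
  set n : (Fin d → ℤ) → ℤ := fun a => if a ∈ A then n0 a else 0 with hn_def
  have hn : δ = ∑ a ∈ A, n a • a := by
    rw [hn0]; exact Finset.sum_congr rfl fun a ha => by simp [hn_def, ha]
  set T : ℕ := 1 + A.sup fun a => (n0 a).natAbs with hT_def
  have hT0 : 0 < T := by omega
  have hTQ : (0:ℚ) < (T : ℚ) := by positivity
  have hnT : ∀ a, |n a| ≤ (T : ℤ) := by
    intro a
    by_cases ha : a ∈ A
    · have h := Finset.le_sup (f := fun a => (n0 a).natAbs) ha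
      simp only [hn_def, if_pos ha]
      have h2 : (n0 a).natAbs ≤ A.sup fun a => (n0 a).natAbs := h
      rw [Int.abs_eq_natAbs]
      omega
    · simp only [hn_def, if_neg ha, abs_zero]
      positivity
  set g : ℕ → (Fin d → ℤ) → ℤ := fun t a => ⌊((t : ℚ) * (n a : ℚ)) / (T : ℚ)⌋ with hg_def
  set v : ℕ → (Fin d → ℤ) := fun t => ∑ a ∈ A, g t a • a with hv_def
  have hg0 : ∀ a, g 0 a = 0 := by intro a; simp [hg_def]
  have hgT : ∀ a, g T a = n a := by
    intro a
    simp only [hg_def]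
    rw [mul_comm, mul_div_assoc, div_self (ne_of_gt hTQ), mul_one, Int.floor_intCast]
  -- step property
  have hstep : ∀ t a, |g (t+1) a - g t a| ≤ 1 := by
    intro t a
    have he : ((t+1 : ℕ) : ℚ) * (n a : ℚ) / (T : ℚ)
        = (t : ℚ) * (n a : ℚ) / (T : ℚ) + (n a : ℚ) / (T : ℚ) := by
      push_cast; ring
    have hq : |(n a : ℚ) / (T : ℚ)| ≤ 1 := by
      rw [abs_div, abs_of_pos hTQ, div_le_one hTQ]
      exact_mod_cast hnT a
    have := ipr_floor_step ((n a : ℚ) / (T : ℚ)) ((t : ℚ) * (n a : ℚ) / (T : ℚ)) hq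
    simp only [hg_def]
    rw [he]
    exact this
  -- coordinate formulas
  have hvcoord : ∀ t i, ((v t i : ℚ)) = ∑ a ∈ A, (g t a : ℚ) * (a i : ℚ) := by
    intro t i
    have h1 : v t i = ∑ a ∈ A, g t a * a i := by
      simp only [hv_def, Finset.sum_apply, Pi.smul_apply, smul_eq_mul]
    rw [h1]
    push_cast
    rfl
  have hδcoord : ∀ i, (δ i : ℚ) = ∑ a ∈ A, (n a : ℚ) * (a i : ℚ) := by
    intro i
    have h1 : δ i = ∑ a ∈ A, n a * a i := by
      rw [hn]; simp only [Finset.sum_apply, Pi.smul_apply, smul_eq_mul]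
    rw [h1]
    push_cast
    rfl
  -- box bound
  have hbox : ∀ t, t ≤ T → ∀ i, |v t i| ≤ (2 * C : ℤ) := by
    intro t ht i
    have key : |(v t i : ℚ)| ≤ 2 * (C : ℚ) := by
      have hsplit : (v t i : ℚ) =
          (∑ a ∈ A, ((g t a : ℚ) - (t : ℚ) * (n a : ℚ) / (T : ℚ)) * (a i : ℚ))
            + ((t : ℚ) / (T : ℚ)) * (δ i : ℚ) := by
        rw [hvcoord t i, hδcoord i, Finset.mul_sum, ← Finset.sum_add_distrib]
        refine Finset.sum_congr rfl fun a _ => ?_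
        field_simp
        ring
      have h1 : |∑ a ∈ A, ((g t a : ℚ) - (t : ℚ) * (n a : ℚ) / (T : ℚ)) * (a i : ℚ)|
          ≤ (C : ℚ) := by
        calc |∑ a ∈ A, ((g t a : ℚ) - (t : ℚ) * (n a : ℚ) / (T : ℚ)) * (a i : ℚ)|
            ≤ ∑ a ∈ A, |((g t a : ℚ) - (t : ℚ) * (n a : ℚ) / (T : ℚ)) * (a i : ℚ)| :=
              Finset.abs_sum_le_sum_abs _ _
          _ ≤ ∑ a ∈ A, |(a i : ℚ)| := by
              refine Finset.sum_le_sum fun a _ => ?_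
              rw [abs_mul]
              have := ipr_floor_close ((t : ℚ) * (n a : ℚ) / (T : ℚ))
              calc |(g t a : ℚ) - (t : ℚ) * (n a : ℚ) / (T : ℚ)| * |(a i : ℚ)|
                  ≤ 1 * |(a i : ℚ)| := by
                    apply mul_le_mul_of_nonneg_right _ (abs_nonneg _)
                    simpa [hg_def] using this
                _ = |(a i : ℚ)| := one_mul _
          _ ≤ (C : ℚ) := by
              have := hA i
              have h2 : ((∑ a ∈ A, |a i| : ℤ) : ℚ) = ∑ a ∈ A, |(a i : ℚ)| := by
                push_cast; rfl
              rw [← h2]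
              exact_mod_cast this
      have h2 : |((t : ℚ) / (T : ℚ)) * (δ i : ℚ)| ≤ (C : ℚ) := by
        rw [abs_mul]
        have ht1 : |(t : ℚ) / (T : ℚ)| ≤ 1 := by
          rw [abs_div, abs_of_pos hTQ, div_le_one hTQ]
          have : (t : ℚ) ≤ (T : ℚ) := by exact_mod_cast ht
          simpa [abs_of_nonneg (by positivity : (0:ℚ) ≤ (t:ℚ))] using this
        have hd1 : |(δ i : ℚ)| ≤ (C : ℚ) := by exact_mod_cast hδ i
        calc |(t : ℚ) / (T : ℚ)| * |(δ i : ℚ)| ≤ 1 * (C : ℚ) :=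
              mul_le_mul ht1 hd1 (abs_nonneg _) zero_le_one
          _ = (C : ℚ) := one_mul _
      rw [hsplit]
      calc |(∑ a ∈ A, ((g t a : ℚ) - (t : ℚ) * (n a : ℚ) / (T : ℚ)) * (a i : ℚ))
            + ((t : ℚ) / (T : ℚ)) * (δ i : ℚ)|
          ≤ |∑ a ∈ A, ((g t a : ℚ) - (t : ℚ) * (n a : ℚ) / (T : ℚ)) * (a i : ℚ)|
            + |((t : ℚ) / (T : ℚ)) * (δ i : ℚ)| := abs_add_le _ _
        _ ≤ (C : ℚ) + (C : ℚ) := add_le_add h1 h2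
        _ = 2 * (C : ℚ) := by ring
    have : ((|v t i| : ℤ) : ℚ) ≤ ((2 * C : ℤ) : ℚ) := by
      push_cast
      push_cast at key
      exact key
    exact_mod_cast this
  -- the box finset
  set B : Finset (Fin d → ℤ) := Fintype.piFinset fun _ : Fin d => Finset.Icc (-(2 * (C : ℤ))) (2 * C)
    with hB_def
  have hBcard : B.card = (4 * C + 1) ^ d := by
    rw [hB_def, Fintype.card_piFinset]
    have h1 : (Finset.Icc (-(2 * (C : ℤ))) (2 * C)).card = 4 * C + 1 := by
      rw [Int.card_Icc]
      omega
    simp [h1]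
  -- step relation
  set S : (Fin d → ℤ) → (Fin d → ℤ) → Prop := fun u w =>
    ∃ c : (Fin d → ℤ) → ℤ, (∀ a, |c a| ≤ 1) ∧ w = u + ∑ a ∈ A, c a • a with hS_def
  -- initial path exists
  have hpath : ∃ w : ℕ → (Fin d → ℤ), w 0 = 0 ∧ w T = δ ∧ (∀ t, t < T → S (w t) (w (t+1))) ∧
      (∀ t, t ≤ T → w t ∈ B) := by
    refine ⟨v, ?_, ?_, ?_, ?_⟩
    · simp only [hv_def]
      refine Finset.sum_eq_zero fun a _ => by rw [hg0 a, zero_smul]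
    · rw [hn, hv_def]
      exact Finset.sum_congr rfl fun a _ => by rw [hgT a]
    · intro t ht
      refine ⟨fun a => g (t+1) a - g t a, fun a => hstep t a, ?_⟩
      simp only [hv_def]
      rw [← Finset.sum_add_distrib]
      refine Finset.sum_congr rfl fun a _ => ?_
      rw [sub_zsmul]
      ring
    · intro t ht
      rw [hB_def, Fintype.mem_piFinset]
      intro i
      rw [Finset.mem_Icc]
      have := hbox t ht i
      rw [abs_le] at this
      exact this
  obtain ⟨L, hL, u, hu0, hue, hust, hub⟩ := ipr_shorten S B 0 δ T hpath
  -- extract coefficients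
  have hchoice : ∀ t, ∃ c : (Fin d → ℤ) → ℤ, (∀ a, |c a| ≤ 1) ∧
      (t < L → u (t+1) = u t + ∑ a ∈ A, c a • a) := by
    intro t
    by_cases h : t < L
    · obtain ⟨c, hc1, hc2⟩ := hust t h
      exact ⟨c, hc1, fun _ => hc2⟩
    · exact ⟨0, by simp, fun h' => absurd h' h⟩
  choose c hc1 hc2 using hchoice
  refine ⟨fun a => ∑ t ∈ Finset.range L, c t a, ?_, ?_⟩
  · have htel : ∀ M, M ≤ L → u M = ∑ a ∈ A, (∑ t ∈ Finset.range M, c t a) • a := by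
      intro M
      induction M with
      | zero =>
          intro _
          rw [hu0]
          refine (Finset.sum_eq_zero fun a _ => by simp).symm
      | succ M ihM =>
          intro hM
          rw [hc2 M (by omega), ihM (by omega)]
          rw [← Finset.sum_add_distrib]
          refine Finset.sum_congr rfl fun a _ => ?_
          rw [Finset.sum_range_succ, add_zsmul]
    rw [← hue]
    exact htel L le_rfl
  · intro a
    calc |∑ t ∈ Finset.range L, c t a| ≤ ∑ t ∈ Finset.range L, |c t a| :=
          Finset.abs_sum_le_sum_abs _ _
      _ ≤ ∑ _t ∈ Finset.range L, 1 := Finset.sum_le_sum fun t _ => hc1 t a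
      _ = (L : ℤ) := by simp
      _ ≤ ((4 * C + 1) ^ d : ℕ) := by
          rw [← hBcard]
          exact_mod_cast hL

lemma ipr_arith (d l w : ℕ) (hd : 1 ≤ d) (hl : 2 ≤ l) (hw : 1 ≤ w) :
    (4 * (l * w) + 1) ^ d * (l * w) ≤ 4 * d ^ d * l ^ (3 * d) * w ^ (3 * d) := by
  have hlw2 : 2 ≤ l * w := le_trans hl (Nat.le_mul_of_pos_right l hw)
  have h5 : 5 ^ d ≤ 2 * (4 * d) ^ d := by
    rcases Nat.eq_or_lt_of_le hd with h | h
    · rw [← h]; norm_num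
    · have h45 : 5 ≤ 4 * d := by omega
      calc 5 ^ d ≤ (4 * d) ^ d := Nat.pow_le_pow_left h45 d
        _ ≤ 2 * (4 * d) ^ d := by omega
  have e2 : 2 * 4 ^ d = 4 * 2 ^ (2 * d - 1) := by
    have h : 2 * d - 1 + 2 = 2 * d + 1 := by omega
    calc 2 * 4 ^ d = 2 * (2 ^ 2) ^ d := by norm_num
      _ = 2 ^ (2 * d + 1) := by
        rw [← pow_mul, ← pow_succ']
      _ = 2 ^ (2 * d - 1 + 2) := by rw [h]
      _ = 2 ^ (2 * d - 1) * 2 ^ 2 := pow_add 2 _ 2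
      _ = 4 * 2 ^ (2 * d - 1) := by ring
  calc (4 * (l * w) + 1) ^ d * (l * w)
      ≤ (5 * (l * w)) ^ d * (l * w) :=
        mul_le_mul_left (Nat.pow_le_pow_left (by omega) d) _
    _ = 5 ^ d * ((l * w) ^ d * (l * w)) := by rw [mul_pow]; ring
    _ ≤ (2 * (4 * d) ^ d) * ((l * w) ^ d * (l * w)) := mul_le_mul_left h5 _
    _ = (4 * 2 ^ (2 * d - 1)) * d ^ d * ((l * w) ^ d * (l * w)) := by
        rw [mul_pow, ← mul_assoc, ← e2]; ring
    _ ≤ (4 * (l * w) ^ (2 * d - 1)) * d ^ d * ((l * w) ^ d * (l * w)) := by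
        have := Nat.pow_le_pow_left hlw2 (2 * d - 1)
        exact mul_le_mul_left (mul_le_mul_left (mul_le_mul_right this 4) _) _
    _ = 4 * d ^ d * (l * w) ^ (2 * d - 1 + d + 1) := by
        rw [pow_add, pow_add, pow_one]; ring
    _ = 4 * d ^ d * l ^ (3 * d) * w ^ (3 * d) := by
        have h : 2 * d - 1 + d + 1 = 3 * d := by omega
        rw [h, mul_pow]; ring

lemma ipr_emb_coord {d : ℕ} (z : Fin d → ℤ) (i : Fin d) : emb d z i = (z i : ℝ) := rfl

lemma ipr_emb_sum {d : ℕ} (A : Finset (Fin d → ℤ)) (n : (Fin d → ℤ) → ℤ) :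
    emb d (∑ a ∈ A, n a • a) = ∑ a ∈ A, (n a : ℝ) • emb d a := by
  funext i
  simp only [emb, Finset.sum_apply, Pi.smul_apply, smul_eq_mul]
  push_cast
  rfl

lemma ipr_le_width {d : ℕ} (A : Finset (Fin d → ℤ)) {a b : Fin d → ℤ}
    (ha : a ∈ A) (hb : b ∈ A) (i : Fin d) : (a i - b i).natAbs ≤ width d A := by
  have h1 : (Finset.univ.sup fun j => ((a, b).1 j - (a, b).2 j).natAbs) ≤ width d A :=
    Finset.le_sup (f := fun p : (Fin d → ℤ) × (Fin d → ℤ) =>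
      Finset.univ.sup fun i => (p.1 i - p.2 i).natAbs) (Finset.mem_product.mpr ⟨ha, hb⟩)
  exact le_trans (Finset.le_sup (f := fun j => ((a, b).1 j - (a, b).2 j).natAbs) (Finset.mem_univ i)) h1

/-- Interior lattice points of the cone are representable: if the `ℓ^∞`-ball of radius
`K_A = 4 d^d ℓ^{3d} w(A)^{3d}` around `x`, intersected with `span_ℝ(A)`, lies in `C_A`,
then `x ∈ P(A)`. -/
theorem interior_points_representable (d : ℕ) (A : Finset (Fin d → ℤ))
    (h0 : (0 : Fin d → ℤ) ∈ A) (hl : 2 ≤ A.card)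
    (x : Fin d → ℤ)
    (hx1 : emb d x ∈ cone d A) (hx2 : x ∈ latt d ↑A)
    (hx3 : ∀ y : Fin d → ℝ,
      (∀ i, |y i - emb d x i| ≤ ((4 * d ^ d * A.card ^ (3 * d) * width d A ^ (3 * d) : ℕ) : ℝ)) →
      y ∈ Submodule.span ℝ (emb d '' (A : Set (Fin d → ℤ))) → y ∈ cone d A) :
    x ∈ PA d ↑A := by
  classical
  obtain ⟨a₁, ha₁, b₁, hb₁, hab⟩ := Finset.one_lt_card.mp hl
  have hd : 1 ≤ d := by
    rcases Nat.eq_zero_or_pos d with h | h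
    · subst h
      exact absurd (funext fun i => i.elim0 : a₁ = b₁) hab
    · exact h
  obtain ⟨w, hw_def⟩ : ∃ w : ℕ, w = width d A := ⟨_, rfl⟩
  obtain ⟨l, hl_def⟩ : ∃ l : ℕ, l = A.card := ⟨_, rfl⟩
  have habs : ∀ a ∈ A, ∀ i, |a i| ≤ (w : ℤ) := by
    intro a ha i
    have h1 : (a i - (0 : Fin d → ℤ) i).natAbs ≤ width d A := ipr_le_width A ha h0 i
    simp only [Pi.zero_apply, sub_zero] at h1
    rw [Int.abs_eq_natAbs, hw_def]
    exact_mod_cast h1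
  have hw1 : 1 ≤ w := by
    obtain ⟨i, hi⟩ : ∃ i, a₁ i ≠ b₁ i := by
      by_contra h
      push_neg at h
      exact hab (funext h)
    have h2 : 1 ≤ (a₁ i - b₁ i).natAbs := by
      have h3 : a₁ i - b₁ i ≠ 0 := sub_ne_zero.mpr hi
      omega
    rw [hw_def]
    exact le_trans h2 (ipr_le_width A ha₁ hb₁ i)
  have hl2 : 2 ≤ l := hl_def ▸ hl
  obtain ⟨Bn, hBn_def⟩ : ∃ Bn : ℕ, Bn = (4 * (l * w) + 1) ^ d := ⟨_, rfl⟩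
  obtain ⟨σ, hσ_def⟩ : ∃ σ : Fin d → ℤ, σ = ∑ a ∈ A, a := ⟨_, rfl⟩
  have hσ_latt : σ ∈ latt d ↑A := by
    rw [hσ_def]
    exact AddSubgroup.sum_mem _ fun a ha => AddSubgroup.subset_closure (Finset.mem_coe.mpr ha)
  have hsumabs : ∀ i, ∑ a ∈ A, |a i| ≤ ((l * w : ℕ) : ℤ) := by
    intro i
    calc ∑ a ∈ A, |a i| ≤ ∑ _a ∈ A, (w : ℤ) := Finset.sum_le_sum fun a ha => habs a ha i
      _ = ((l * w : ℕ) : ℤ) := by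
          rw [Finset.sum_const, nsmul_eq_mul, ← hl_def]
          push_cast
          ring
  have hσbound : ∀ i, |σ i| ≤ ((l * w : ℕ) : ℤ) := by
    intro i
    have h1 : σ i = ∑ a ∈ A, a i := by rw [hσ_def]; simp [Finset.sum_apply]
    rw [h1]
    exact le_trans (Finset.abs_sum_le_sum_abs _ _) (hsumabs i)
  have hKb : (Bn * (l * w) : ℕ) ≤ 4 * d ^ d * l ^ (3 * d) * w ^ (3 * d) := by
    rw [hBn_def]
    exact ipr_arith d l w hd hl2 hw1
  obtain ⟨x', hx'_def⟩ : ∃ x' : Fin d → ℤ, x' = x - (Bn : ℤ) • σ := ⟨_, rfl⟩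
  have hx'_latt : x' ∈ latt d ↑A := by
    rw [hx'_def]
    exact AddSubgroup.sub_mem _ hx2 (AddSubgroup.zsmul_mem _ hσ_latt _)
  have hspan : ∀ z ∈ latt d (↑A : Set (Fin d → ℤ)),
      emb d z ∈ Submodule.span ℝ (emb d '' (A : Set (Fin d → ℤ))) := by
    intro z hz
    obtain ⟨n, hn⟩ := ipr_latt_rep A hz
    rw [hn, ipr_emb_sum]
    refine Submodule.sum_mem _ fun a ha => Submodule.smul_mem _ _ ?_
    exact Submodule.subset_span ⟨a, Finset.mem_coe.mpr ha, rfl⟩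
  have hcone' : emb d x' ∈ cone d A := by
    refine hx3 (emb d x') ?_ (hspan x' hx'_latt)
    intro i
    have h1 : emb d x' i - emb d x i = -(((Bn : ℤ) * σ i : ℤ) : ℝ) := by
      simp only [ipr_emb_coord, hx'_def, Pi.sub_apply, Pi.smul_apply, smul_eq_mul]
      push_cast
      ring
    rw [h1, abs_neg, ← Int.cast_abs]
    have h2 : |(Bn : ℤ) * σ i| ≤ ((Bn * (l * w) : ℕ) : ℤ) := by
      rw [abs_mul, abs_of_nonneg (Int.natCast_nonneg Bn)]
      calc (Bn : ℤ) * |σ i| ≤ (Bn : ℤ) * ((l * w : ℕ) : ℤ) :=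
            mul_le_mul_of_nonneg_left (hσbound i) (Int.natCast_nonneg Bn)
        _ = ((Bn * (l * w) : ℕ) : ℤ) := by push_cast; ring
    have h3 : ((Bn * (l * w) : ℕ) : ℤ) ≤ ((4 * d ^ d * l ^ (3 * d) * w ^ (3 * d) : ℕ) : ℤ) := by
      exact_mod_cast hKb
    have h4 := le_trans h2 h3
    rw [hl_def, hw_def] at h4
    exact_mod_cast h4
  obtain ⟨c, hc0, hceq⟩ := hcone'
  obtain ⟨k, hk_def⟩ : ∃ k : (Fin d → ℤ) → ℕ, k = fun a => ⌊c a⌋₊ := ⟨_, rfl⟩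
  obtain ⟨y₂, hy₂_def⟩ : ∃ y₂ : Fin d → ℤ, y₂ = ∑ a ∈ A, (k a : ℤ) • a := ⟨_, rfl⟩
  have hy₂_latt : y₂ ∈ latt d ↑A := by
    rw [hy₂_def]
    exact AddSubgroup.sum_mem _ fun a ha =>
      AddSubgroup.zsmul_mem _ (AddSubgroup.subset_closure (Finset.mem_coe.mpr ha)) _
  obtain ⟨δ, hδ_def⟩ : ∃ δ : Fin d → ℤ, δ = x' - y₂ := ⟨_, rfl⟩
  have hδ_latt : δ ∈ latt d ↑A := hδ_def ▸ AddSubgroup.sub_mem _ hx'_latt hy₂_latt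
  have hδbound : ∀ i, |δ i| ≤ ((l * w : ℕ) : ℤ) := by
    intro i
    have hx'i : ((x' i : ℤ) : ℝ) = ∑ a ∈ A, c a * ((a i : ℤ) : ℝ) := by
      have h5 := congrFun hceq i
      simp only [ipr_emb_coord] at h5
      rw [h5]
      simp only [Finset.sum_apply, Pi.smul_apply, smul_eq_mul]
      rfl
    have hy₂i : ((y₂ i : ℤ) : ℝ) = ∑ a ∈ A, (k a : ℝ) * ((a i : ℤ) : ℝ) := by
      have h1 : y₂ i = ∑ a ∈ A, (k a : ℤ) * a i := by
        rw [hy₂_def]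
        simp [Finset.sum_apply]
      rw [h1]
      push_cast
      rfl
    have hδr : ((δ i : ℤ) : ℝ) = ∑ a ∈ A, (c a - (k a : ℝ)) * ((a i : ℤ) : ℝ) := by
      have h1 : δ i = x' i - y₂ i := by rw [hδ_def]; rfl
      rw [h1]
      push_cast
      rw [hx'i, hy₂i, ← Finset.sum_sub_distrib]
      exact Finset.sum_congr rfl fun a _ => by ring
    have key : |((δ i : ℤ) : ℝ)| ≤ ((l * w : ℕ) : ℝ) := by
      rw [hδr]
      calc |∑ a ∈ A, (c a - (k a : ℝ)) * ((a i : ℤ) : ℝ)|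
          ≤ ∑ a ∈ A, |(c a - (k a : ℝ)) * ((a i : ℤ) : ℝ)| := Finset.abs_sum_le_sum_abs _ _
        _ ≤ ∑ _a ∈ A, ((w : ℕ) : ℝ) := by
            refine Finset.sum_le_sum fun a ha => ?_
            rw [abs_mul]
            have hfl : 0 ≤ c a - (k a : ℝ) := by
              have h6 := Nat.floor_le (hc0 a)
              rw [hk_def]
              simp only []
              linarith
            have hfu : c a - (k a : ℝ) ≤ 1 := by
              have h7 := Nat.lt_floor_add_one (c a)
              rw [hk_def]
              simp only []
              linarith
            have h4 : |((a i : ℤ) : ℝ)| ≤ ((w : ℕ) : ℝ) := by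
              rw [← Int.cast_abs]
              exact_mod_cast habs a ha i
            calc |c a - (k a : ℝ)| * |((a i : ℤ) : ℝ)|
                ≤ 1 * ((w : ℕ) : ℝ) := by
                  refine mul_le_mul ?_ h4 (abs_nonneg _) zero_le_one
                  rw [abs_of_nonneg hfl]
                  exact hfu
              _ = ((w : ℕ) : ℝ) := one_mul _
        _ = ((l * w : ℕ) : ℝ) := by
            rw [Finset.sum_const, nsmul_eq_mul, ← hl_def]
            push_cast
            ring
    rw [← Int.cast_abs] at key
    exact_mod_cast key
  obtain ⟨nδ, hnδ⟩ := ipr_latt_rep A hδ_latt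
  obtain ⟨m, hm, hmb⟩ := ipr_siegel A (l * w) hsumabs δ hδbound nδ hnδ
  have hmb' : ∀ a, |m a| ≤ (Bn : ℤ) := by
    intro a
    have h8 := hmb a
    rw [hBn_def]
    exact_mod_cast h8
  have hxdec : x = ∑ a ∈ A, ((k a : ℤ) + (Bn : ℤ) + m a) • a := by
    have h1 : x = y₂ + (Bn : ℤ) • σ + δ := by
      rw [hδ_def, hx'_def]
      abel
    rw [h1]
    have h2 : (Bn : ℤ) • σ = ∑ a ∈ A, (Bn : ℤ) • a := by
      rw [hσ_def, Finset.smul_sum]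
    rw [h2, hy₂_def, hm, ← Finset.sum_add_distrib, ← Finset.sum_add_distrib]
    refine Finset.sum_congr rfl fun a _ => ?_
    rw [add_zsmul, add_zsmul]
  obtain ⟨N, hN_def⟩ : ∃ N : (Fin d → ℤ) → ℕ,
      N = fun a => ((k a : ℤ) + (Bn : ℤ) + m a).toNat := ⟨_, rfl⟩
  have hNcast : ∀ a, ((N a : ℕ) : ℤ) = (k a : ℤ) + (Bn : ℤ) + m a := by
    intro a
    rw [hN_def]
    refine Int.toNat_of_nonneg ?_
    have h1 := hmb' a
    rw [abs_le] at h1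
    have h2 : (0:ℤ) ≤ (k a : ℤ) := Int.natCast_nonneg _
    linarith [h1.1]
  have hxdec' : x = ∑ a ∈ A, N a • a := by
    rw [hxdec]
    refine Finset.sum_congr rfl fun a _ => ?_
    rw [← hNcast a, natCast_zsmul]
  have hmem : x ∈ nfold d ↑A (∑ a ∈ A, N a) := by
    rw [hxdec']
    exact ipr_sum_mem_nfold N
  have h0mem : (0 : Fin d → ℤ) ∈ nfold d (↑A : Set (Fin d → ℤ)) 1 :=
    ⟨fun _ => 0, fun _ => Finset.mem_coe.mpr h0, by simp⟩
  have hfinal : x ∈ nfold d ↑A (1 + ∑ a ∈ A, N a) := by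
    have h9 := ipr_nfold_add h0mem hmem
    rwa [zero_add] at h9
  refine Set.mem_biUnion ?_ hfinal
  simp only [Set.mem_Ici]
  omega
end
end
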